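/- arXiv:1805.06579 — 9 statements merged into one kernel-verified Lean document; each statement's English description precedes it below -/
import Mathlib

section
/- Let X : [t₀, ∞) → ℝⁿ (with t₀ > 0) be a continuously differentiable solution of the ADMM flow AᵀA Ẋ(t) + ∇V(X(t)) = 0, and let X⋆ be a minimizer of V with V⋆ = V(X⋆). Then for all t ≥ t₀, V(X(t)) − V⋆ ≤ C/t, where C = t₀·(V(X(t₀)) − V⋆) + ½‖A(X(t₀) − X⋆)‖². -/
open Matrix Set

open scoped RealInnerProductSpace

/-- Gradient inequality for differentiable convex functions. -/
lemma grad_convex_ineq {E : Type*} [NormedAddCommGroup E] [InnerProductSpace ℝ E] [CompleteSpace E]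
    {V : E → ℝ} (hconv : ConvexOn ℝ Set.univ V) {x : E} {G : E}
    (hG : HasGradientAt V G x) (y : E) : ⟪G, y - x⟫ ≤ V y - V x := by
  set φ : ℝ → ℝ := fun s => V (x + s • (y - x)) with hφdef
  have hline : ∀ s : ℝ, HasDerivAt (fun s : ℝ => x + s • (y - x)) (y - x) s := by
    intro s
    simpa using ((hasDerivAt_id s).smul_const (y - x)).const_add x
  have h0 : x + (0 : ℝ) • (y - x) = x := by simp
  have hφ0 : HasDerivAt φ ⟪G, y - x⟫ 0 := by
    have hF : HasFDerivAt V (InnerProductSpace.toDual ℝ E G : E →L[ℝ] ℝ)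
        ((fun s : ℝ => x + s • (y - x)) 0) := by
      rw [show ((fun s : ℝ => x + s • (y - x)) 0) = x by simp]
      exact hG.hasFDerivAt
    have := hF.comp_hasDerivAt 0 (hline 0)
    simpa [φ, InnerProductSpace.toDual_apply_apply, Function.comp_def] using this
  have hφc : ConvexOn ℝ Set.univ φ := by
    have := hconv.comp_affineMap (AffineMap.lineMap x y : ℝ →ᵃ[ℝ] E)
    have heq : (V ∘ (AffineMap.lineMap x y : ℝ →ᵃ[ℝ] E)) = φ := by
      funext s
      simp [φ, AffineMap.lineMap_apply, add_comm]
    rw [heq, Set.preimage_univ] at this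
    exact this
  have hs := hφc.le_slope_of_hasDerivAt (Set.mem_univ (0:ℝ)) (Set.mem_univ (1:ℝ))
    one_pos hφ0
  have hslope : slope φ 0 1 = V y - V x := by
    rw [slope_def_field]
    simp [φ]
  rw [hslope] at hs
  exact hs

/-- **Convergence rate of the ADMM flow.**
If `X` is a continuously differentiable solution of the ADMM flow
`AᵀA Ẋ(t) + ∇V(X(t)) = 0` on `[t₀, ∞)` (with `t₀ > 0`), where
`V(x) = f(x) + g(Ax)` with `f, g` continuously differentiable convex functions and
`A` of full column rank, and `X⋆` is a minimizer of `V`, then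
`V(X(t)) − V⋆ ≤ C / t` for all `t ≥ t₀`, where
`C = t₀ (V(X(t₀)) − V⋆) + ½ ‖A(X(t₀) − X⋆)‖²`. -/
theorem admm_flow_convergence_rate
    {m n : ℕ} (hmn : n ≤ m)
    (f : EuclideanSpace ℝ (Fin n) → ℝ) (g : EuclideanSpace ℝ (Fin m) → ℝ)
    (hf : ContDiff ℝ 1 f) (hg : ContDiff ℝ 1 g)
    (hfconv : ConvexOn ℝ Set.univ f) (hgconv : ConvexOn ℝ Set.univ g)
    (A : Matrix (Fin m) (Fin n) ℝ) (hA : A.rank = n)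
    (V : EuclideanSpace ℝ (Fin n) → ℝ)
    (hV : ∀ x, V x = f x + g (Matrix.toEuclideanLin A x))
    (t₀ : ℝ) (ht₀ : 0 < t₀)
    (X X' : ℝ → EuclideanSpace ℝ (Fin n))
    (hX : ∀ t ∈ Set.Ici t₀, HasDerivAt X (X' t) t)
    (hX' : ContinuousOn X' (Set.Ici t₀))
    (hflow : ∀ t ∈ Set.Ici t₀,
      Matrix.toEuclideanLin (Aᵀ * A) (X' t) + gradient V (X t) = 0)
    (Xstar : EuclideanSpace ℝ (Fin n)) (hXstar : ∀ x, V Xstar ≤ V x)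
    (Vstar : ℝ) (hVstar : Vstar = V Xstar) :
    ∀ t ∈ Set.Ici t₀,
      V (X t) - Vstar ≤
        (t₀ * (V (X t₀) - Vstar)
          + (1 / 2) * ‖Matrix.toEuclideanLin A (X t₀ - Xstar)‖ ^ 2) / t := by
  -- abbreviations
  set B : EuclideanSpace ℝ (Fin n) →ₗ[ℝ] EuclideanSpace ℝ (Fin m) :=
    Matrix.toEuclideanLin A with hB
  set Bc : EuclideanSpace ℝ (Fin n) →L[ℝ] EuclideanSpace ℝ (Fin m) :=
    LinearMap.toContinuousLinearMap B with hBc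
  have hBcB : ∀ x, Bc x = B x := fun x => rfl
  -- key adjoint identity
  have hkey : ∀ u v : EuclideanSpace ℝ (Fin n),
      ⟪Matrix.toEuclideanLin (Aᵀ * A) u, v⟫ = ⟪B u, B v⟫ := by
    intro u v
    have hAT : Aᵀ = Aᴴ := by
      ext i j; simp [Matrix.conjTranspose_apply]
    have hcomp : Matrix.toEuclideanLin (Aᵀ * A) u
        = Matrix.toEuclideanLin Aᵀ (B u) := by
      rw [Matrix.toEuclideanLin_eq_toLin, Matrix.toLin_mul _ (PiLp.basisFun 2 ℝ (Fin m)) _]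
      rfl
    rw [hcomp, hAT, Matrix.toEuclideanLin_conjTranspose_eq_adjoint,
      LinearMap.adjoint_inner_left]
  -- V is differentiable and convex
  have hVdef : V = fun x => f x + g (Bc x) := funext hV
  have hVdiff : Differentiable ℝ V := by
    rw [hVdef]
    exact (hf.differentiable one_ne_zero).add
      ((hg.differentiable one_ne_zero).comp Bc.differentiable)
  have hVconv : ConvexOn ℝ Set.univ V := by
    rw [hVdef]
    refine hfconv.add ?_
    have h := hgconv.comp_affineMap (B.toAffineMap)
    rw [Set.preimage_univ] at h
    exact h
  -- gradient inequality at X t toward Xstar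
  have hgrad_ineq : ∀ t, ⟪gradient V (X t), Xstar - X t⟫ ≤ Vstar - V (X t) := by
    intro t
    rw [hVstar]
    exact grad_convex_ineq hVconv ((hVdiff (X t)).hasGradientAt) Xstar
  -- energy function
  set W : ℝ → ℝ := fun t => t * (V (X t) - Vstar) + (1/2) * ‖B (X t - Xstar)‖^2 with hW
  set W' : ℝ → ℝ := fun t => (V (X t) - Vstar) + t * ⟪gradient V (X t), X' t⟫
      + ⟪B (X t - Xstar), B (X' t)⟫ with hW'
  have hWd : ∀ t ∈ Set.Ici t₀, HasDerivAt W (W' t) t := by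
    intro t ht
    have h1 : HasDerivAt (fun t => V (X t)) ⟪gradient V (X t), X' t⟫ t := by
      have := ((hVdiff (X t)).hasGradientAt.hasFDerivAt).comp_hasDerivAt t (hX t ht)
      simpa [InnerProductSpace.toDual_apply_apply, Function.comp_def] using this
    have h2 : HasDerivAt (fun t => B (X t - Xstar)) (B (X' t)) t := by
      have := (Bc.hasFDerivAt.comp_hasDerivAt t (hX t ht)).sub_const (Bc Xstar)
      simpa [map_sub, hBcB] using this
    have h3 : HasDerivAt (fun t => ‖B (X t - Xstar)‖^2)
        (2 * ⟪B (X t - Xstar), B (X' t)⟫) t := h2.norm_sq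
    have h4 := ((hasDerivAt_id t).mul (h1.sub_const Vstar)).add (h3.const_mul (1/2))
    simp only [id_eq, one_mul] at h4
    refine h4.congr_deriv ?_
    simp only [W', id_eq]
    ring
  have hW'le : ∀ t ∈ Set.Ici t₀, W' t ≤ 0 := by
    intro t ht
    have hL : Matrix.toEuclideanLin (Aᵀ * A) (X' t) = -(gradient V (X t)) :=
      add_eq_zero_iff_eq_neg.mp (hflow t ht)
    have hG : gradient V (X t) = -(Matrix.toEuclideanLin (Aᵀ * A) (X' t)) := by
      rw [hL, neg_neg]
    have e1 : ⟪gradient V (X t), X' t⟫ = -⟪B (X' t), B (X' t)⟫ := by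
      rw [hG, inner_neg_left, hkey]
    have e2 : ⟪B (X t - Xstar), B (X' t)⟫ ≤ Vstar - V (X t) := by
      have heq : ⟪B (X t - Xstar), B (X' t)⟫
          = ⟪gradient V (X t), Xstar - X t⟫ := by
        calc ⟪B (X t - Xstar), B (X' t)⟫
            = ⟪B (X' t), B (X t - Xstar)⟫ := real_inner_comm _ _
          _ = ⟪Matrix.toEuclideanLin (Aᵀ * A) (X' t), X t - Xstar⟫ := (hkey _ _).symm
          _ = ⟪gradient V (X t), Xstar - X t⟫ := by
              rw [hL, inner_neg_left, ← inner_neg_right, neg_sub]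
      rw [heq]
      exact hgrad_ineq t
    have ht0 : (0:ℝ) ≤ t := le_trans ht₀.le ht
    have e3 : t * ⟪gradient V (X t), X' t⟫ ≤ 0 := by
      rw [e1]
      exact mul_nonpos_of_nonneg_of_nonpos ht0 (neg_nonpos_of_nonneg real_inner_self_nonneg)
    calc W' t ≤ (V (X t) - Vstar) + 0 + (Vstar - V (X t)) := by
          exact add_le_add (add_le_add le_rfl e3) e2
      _ = 0 := by ring
  -- W is antitone on Ici t₀
  have hanti : AntitoneOn W (Set.Ici t₀) := by
    apply antitoneOn_of_deriv_nonpos (convex_Ici t₀)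
    · exact fun t ht => (hWd t ht).continuousAt.continuousWithinAt
    · intro t ht
      rw [interior_Ici] at ht
      exact (hWd t (Set.mem_Ici.mpr (le_of_lt ht))).differentiableAt.differentiableWithinAt
    · intro t ht
      rw [interior_Ici] at ht
      rw [(hWd t (Set.mem_Ici.mpr (le_of_lt ht))).deriv]
      exact hW'le t (Set.mem_Ici.mpr (le_of_lt ht))
  -- conclude
  intro t ht
  have htpos : 0 < t := lt_of_lt_of_le ht₀ ht
  rw [le_div_iff₀ htpos]
  have h1 : t * (V (X t) - Vstar) ≤ W t := by
    have : (0:ℝ) ≤ (1/2) * ‖B (X t - Xstar)‖^2 := by positivity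
    simp only [W]
    linarith
  have h2 : W t ≤ W t₀ := hanti (le_refl t₀ : t₀ ∈ Set.Ici t₀) ht ht
  calc (V (X t) - Vstar) * t = t * (V (X t) - Vstar) := by ring
    _ ≤ W t := h1
    _ ≤ W t₀ := h2
    _ = _ := rfl
end

section
/- Let X : [t₀, ∞) → ℝⁿ (with t₀ > 0) be a continuously differentiable solution of the ADMM flow AᵀA Ẋ(t) + ∇V(X(t)) = 0, let X⋆ be a minimizer of V, and define E(t) = t·(V(X(t)) − V(X⋆)) + ½‖A(X(t) − X⋆)‖². Then E is nonincreasing on [t₀, ∞); in fact Ė(t) = −t‖AẊ(t)‖² + V(X(t)) − V(X⋆) + ⟨X⋆ − X(t), ∇V(X(t))⟩ ≤ 0 for all t ≥ t₀. -/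
open Matrix Set RealInnerProductSpace

private lemma admm_inner_key {m n : ℕ} (A : Matrix (Fin m) (Fin n) ℝ)
    (v w : EuclideanSpace ℝ (Fin n)) :
    ⟪Matrix.toEuclideanLin (Aᵀ * A) v, w⟫
      = ⟪Matrix.toEuclideanLin A v, Matrix.toEuclideanLin A w⟫ := by
  have h1 : Matrix.toEuclideanLin (Aᵀ * A) v
      = Matrix.toEuclideanLin Aᵀ (Matrix.toEuclideanLin A v) := by
    simp [Matrix.toEuclideanLin_apply, Matrix.mulVec_mulVec]
  have h2 : (Aᵀ : Matrix (Fin n) (Fin m) ℝ) = Aᴴ := by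
    ext i j; simp [Matrix.conjTranspose_apply]
  rw [h1, h2, Matrix.toEuclideanLin_conjTranspose_eq_adjoint, LinearMap.adjoint_inner_left]

private lemma admm_grad_ineq {F : Type*} [NormedAddCommGroup F] [InnerProductSpace ℝ F]
    [CompleteSpace F] {V : F → ℝ} (hconv : ConvexOn ℝ Set.univ V)
    (hd : ∀ x, DifferentiableAt ℝ V x) (x y : F) :
    V x + ⟪gradient V x, y - x⟫ ≤ V y := by
  set c : ℝ → F := fun s => x + s • (y - x) with hc
  have hcd : ∀ s : ℝ, HasDerivAt c (y - x) s := by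
    intro s
    simpa [hc] using ((hasDerivAt_id s).smul_const (y - x)).const_add x
  have hφconv : ConvexOn ℝ Set.univ (V ∘ c) := by
    have := hconv.comp_affineMap
      (AffineMap.const ℝ ℝ x + (LinearMap.toSpanSingleton ℝ F (y - x)).toAffineMap)
    simpa [hc, Function.comp_def, Pi.add_def, LinearMap.toSpanSingleton_apply] using this
  have hφd : HasDerivAt (V ∘ c) ⟪gradient V x, y - x⟫ 0 := by
    have h0 : c 0 = x := by simp [hc]
    have := ((hd (c 0)).hasGradientAt.hasFDerivAt).comp_hasDerivAt 0 (hcd 0)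
    simpa [h0, InnerProductSpace.toDual_apply_apply] using this
  have hs := hφconv.le_slope_of_hasDerivAt (Set.mem_univ 0) (Set.mem_univ 1)
    one_pos hφd
  rw [slope_def_field] at hs
  have h0 : (V ∘ c) 0 = V x := by simp [hc]
  have h1 : (V ∘ c) 1 = V y := by simp [hc]
  rw [h0, h1] at hs
  simp at hs
  have hgi : ⟪gradient V x, y - x⟫ = (fderiv ℝ V x) y - (fderiv ℝ V x) x := by simp
  linarith

/-- **The Lyapunov function of the ADMM flow is nonincreasing.**
If `X` is a continuously differentiable solution of the ADMM flow
`AᵀA Ẋ(t) + ∇V(X(t)) = 0` on `[t₀, ∞)` (with `t₀ > 0`), `X⋆` is a minimizer of `V`,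
and `E(t) = t (V(X(t)) − V(X⋆)) + ½‖A(X(t) − X⋆)‖²`, then `E` is nonincreasing on
`[t₀, ∞)`; in fact `Ė(t) = −t‖AẊ(t)‖² + V(X(t)) − V(X⋆) + ⟨X⋆ − X(t), ∇V(X(t))⟩ ≤ 0`
for all `t ≥ t₀`. -/
theorem admm_flow_lyapunov_nonincreasing
    {m n : ℕ} (hmn : n ≤ m)
    (f : EuclideanSpace ℝ (Fin n) → ℝ) (g : EuclideanSpace ℝ (Fin m) → ℝ)
    (hf : ContDiff ℝ 1 f) (hg : ContDiff ℝ 1 g)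
    (hfconv : ConvexOn ℝ Set.univ f) (hgconv : ConvexOn ℝ Set.univ g)
    (A : Matrix (Fin m) (Fin n) ℝ) (hA : A.rank = n)
    (V : EuclideanSpace ℝ (Fin n) → ℝ)
    (hV : ∀ x, V x = f x + g (Matrix.toEuclideanLin A x))
    (t₀ : ℝ) (ht₀ : 0 < t₀)
    (X X' : ℝ → EuclideanSpace ℝ (Fin n))
    (hX : ∀ t ∈ Set.Ici t₀, HasDerivAt X (X' t) t)
    (hX' : ContinuousOn X' (Set.Ici t₀))
    (hflow : ∀ t ∈ Set.Ici t₀,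
      Matrix.toEuclideanLin (Aᵀ * A) (X' t) + gradient V (X t) = 0)
    (Xstar : EuclideanSpace ℝ (Fin n)) (hXstar : ∀ x, V Xstar ≤ V x)
    (E : ℝ → ℝ)
    (hE : ∀ t, E t = t * (V (X t) - V Xstar)
      + (1 / 2) * ‖Matrix.toEuclideanLin A (X t - Xstar)‖ ^ 2) :
    AntitoneOn E (Set.Ici t₀) ∧
      ∀ t ∈ Set.Ici t₀,
        HasDerivAt E
          (-t * ‖Matrix.toEuclideanLin A (X' t)‖ ^ 2 + (V (X t) - V Xstar)
            + ⟪Xstar - X t, gradient V (X t)⟫) t ∧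
        -t * ‖Matrix.toEuclideanLin A (X' t)‖ ^ 2 + (V (X t) - V Xstar)
            + ⟪Xstar - X t, gradient V (X t)⟫ ≤ 0 := by
  set c := V Xstar with hcdef
  set Lc : EuclideanSpace ℝ (Fin n) →L[ℝ] EuclideanSpace ℝ (Fin m) :=
    LinearMap.toContinuousLinearMap (Matrix.toEuclideanLin A) with hLc
  have hLcapp : ∀ x, Lc x = Matrix.toEuclideanLin A x := fun x => rfl
  have hVfun : V = fun x => f x + g (Lc x) := funext hV
  have hVd : ∀ x, DifferentiableAt ℝ V x := by
    intro x
    rw [hVfun]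
    exact ((hf.differentiable one_ne_zero) x).add
      (((hg.differentiable one_ne_zero) (Lc x)).comp x Lc.differentiableAt)
  have hVconv : ConvexOn ℝ Set.univ V := by
    rw [hVfun]
    refine hfconv.add ?_
    have := hgconv.comp_affineMap (Matrix.toEuclideanLin A).toAffineMap
    simpa [Function.comp_def, hLcapp] using this
  -- the derivative at each point
  have hderiv : ∀ t ∈ Set.Ici t₀,
      HasDerivAt E (-t * ‖Matrix.toEuclideanLin A (X' t)‖ ^ 2 + (V (X t) - c)
        + ⟪Xstar - X t, gradient V (X t)⟫) t := by
    intro t ht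
    have hgrad : Matrix.toEuclideanLin (Aᵀ * A) (X' t) = -gradient V (X t) :=
      eq_neg_of_add_eq_zero_left (hflow t ht)
    have h1 : HasDerivAt (fun s => V (X s)) ⟪gradient V (X t), X' t⟫ t := by
      have := ((hVd (X t)).hasGradientAt.hasFDerivAt).comp_hasDerivAt t (hX t ht)
      simpa [Function.comp_def, InnerProductSpace.toDual_apply_apply] using this
    have h2 : HasDerivAt (fun s => s * (V (X s) - c))
        ((V (X t) - c) + t * ⟪gradient V (X t), X' t⟫) t := by
      have := (hasDerivAt_id t).mul (h1.sub_const c)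
      simpa [mul_comm, Pi.mul_def] using this
    have h3 : HasDerivAt (fun s => Lc (X s - Xstar)) (Lc (X' t)) t :=
      Lc.hasFDerivAt.comp_hasDerivAt t ((hX t ht).sub_const Xstar)
    have h4 : HasDerivAt (fun s => ⟪Lc (X s - Xstar), Lc (X s - Xstar)⟫)
        (⟪Lc (X t - Xstar), Lc (X' t)⟫ + ⟪Lc (X' t), Lc (X t - Xstar)⟫) t :=
      h3.inner ℝ h3
    have hEfun : E = fun s => s * (V (X s) - c)
        + (1 / 2) * ⟪Lc (X s - Xstar), Lc (X s - Xstar)⟫ := by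
      funext s
      rw [hE s, real_inner_self_eq_norm_sq, hLcapp]
    have hD0 : HasDerivAt E ((V (X t) - c) + t * ⟪gradient V (X t), X' t⟫
        + (1 / 2) * (⟪Lc (X t - Xstar), Lc (X' t)⟫ + ⟪Lc (X' t), Lc (X t - Xstar)⟫)) t := by
      rw [hEfun]
      exact h2.add (h4.const_mul (1 / 2 : ℝ))
    have hgrad' : gradient V (X t) = -Matrix.toEuclideanLin (Aᵀ * A) (X' t) :=
      eq_neg_of_add_eq_zero_right (hflow t ht)
    have e1 : ⟪gradient V (X t), X' t⟫ = -‖Matrix.toEuclideanLin A (X' t)‖ ^ 2 := by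
      rw [hgrad', inner_neg_left, admm_inner_key, real_inner_self_eq_norm_sq]
    have e2 : ⟪Lc (X t - Xstar), Lc (X' t)⟫ = ⟪Xstar - X t, gradient V (X t)⟫ := by
      rw [hLcapp, hLcapp, real_inner_comm, ← admm_inner_key, hgrad, inner_neg_left]
      simp only [inner_sub_left, inner_sub_right]
      rw [real_inner_comm (gradient V (X t)) Xstar, real_inner_comm (gradient V (X t)) (X t)]
      ring
    have e3 : ⟪Lc (X' t), Lc (X t - Xstar)⟫ = ⟪Xstar - X t, gradient V (X t)⟫ := by
      rw [real_inner_comm]; exact e2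
    rw [e1, e2, e3] at hD0
    convert hD0 using 1
    ring
  have hineq : ∀ t ∈ Set.Ici t₀,
      -t * ‖Matrix.toEuclideanLin A (X' t)‖ ^ 2 + (V (X t) - c)
        + ⟪Xstar - X t, gradient V (X t)⟫ ≤ 0 := by
    intro t ht
    have h1 : 0 ≤ t * ‖Matrix.toEuclideanLin A (X' t)‖ ^ 2 :=
      mul_nonneg (le_of_lt (lt_of_lt_of_le ht₀ ht)) (sq_nonneg _)
    have h2 := admm_grad_ineq hVconv hVd (X t) Xstar
    rw [real_inner_comm] at h2
    linarith
  refine ⟨?_, fun t ht => ⟨hderiv t ht, hineq t ht⟩⟩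
  apply antitoneOn_of_deriv_nonpos (convex_Ici t₀)
  · exact fun s hs => ((hderiv s hs).continuousAt.continuousWithinAt)
  · intro s hs
    rw [interior_Ici] at hs
    exact ((hderiv s (mem_Ici.mpr (le_of_lt hs))).differentiableAt.differentiableWithinAt)
  · intro s hs
    rw [interior_Ici] at hs
    rw [(hderiv s (mem_Ici.mpr (le_of_lt hs))).deriv]
    exact hineq s (mem_Ici.mpr (le_of_lt hs))
end

section
/- Let X : I → ℝⁿ be a continuously differentiable solution of the ADMM flow AᵀA Ẋ(t) + ∇V(X(t)) = 0 on an interval I. Then for every t ∈ I, the derivative of t ↦ V(X(t)) equals −‖A Ẋ(t)‖². -/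
open Matrix Set

/-- **Energy dissipation along the ADMM flow.**
If `X` is a continuously differentiable solution of the ADMM flow
`AᵀA Ẋ(t) + ∇V(X(t)) = 0` on an interval `I`, then for every `t ∈ I` the derivative
of `t ↦ V(X(t))` equals `−‖AẊ(t)‖²`. -/
theorem admm_flow_energy_dissipation
    {m n : ℕ} (hmn : n ≤ m)
    (f : EuclideanSpace ℝ (Fin n) → ℝ) (g : EuclideanSpace ℝ (Fin m) → ℝ)
    (hf : ContDiff ℝ 1 f) (hg : ContDiff ℝ 1 g)
    (hfconv : ConvexOn ℝ Set.univ f) (hgconv : ConvexOn ℝ Set.univ g)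
    (A : Matrix (Fin m) (Fin n) ℝ) (hA : A.rank = n)
    (V : EuclideanSpace ℝ (Fin n) → ℝ)
    (hV : ∀ x, V x = f x + g (Matrix.toEuclideanLin A x))
    (I : Set ℝ) (hI : I.OrdConnected)
    (X X' : ℝ → EuclideanSpace ℝ (Fin n))
    (hX : ∀ t ∈ I, HasDerivAt X (X' t) t)
    (hX' : ContinuousOn X' I)
    (hflow : ∀ t ∈ I,
      Matrix.toEuclideanLin (Aᵀ * A) (X' t) + gradient V (X t) = 0) :
    ∀ t ∈ I, HasDerivAt (fun s => V (X s))
      (-‖Matrix.toEuclideanLin A (X' t)‖ ^ 2) t := by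
  intro t ht
  -- V is differentiable
  have hVeq : V = fun x => f x + g (Matrix.toEuclideanLin A x) := funext hV
  have hL : ContDiff ℝ 1 (fun x : EuclideanSpace ℝ (Fin n) => Matrix.toEuclideanLin A x) := by
    exact (LinearMap.toContinuousLinearMap (Matrix.toEuclideanLin A)).contDiff
  have hVc : ContDiff ℝ 1 V := by
    rw [hVeq]; exact hf.add (hg.comp hL)
  have hVd : DifferentiableAt ℝ V (X t) := (hVc.differentiable one_ne_zero).differentiableAt
  have hgrad := hVd.hasGradientAt
  have hFd : HasFDerivAt V (InnerProductSpace.toDual ℝ _ (gradient V (X t))) (X t) :=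
    hgrad.hasFDerivAt
  have hcomp : HasDerivAt (fun s => V (X s))
      (InnerProductSpace.toDual ℝ _ (gradient V (X t)) (X' t)) t :=
    hFd.comp_hasDerivAt t (hX t ht)
  have hgradval : gradient V (X t) = -(Matrix.toEuclideanLin (Aᵀ * A) (X' t)) := by
    exact eq_neg_of_add_eq_zero_right (hflow t ht)
  have hmul : Matrix.toEuclideanLin (Aᵀ * A) (X' t)
      = Matrix.toEuclideanLin Aᵀ (Matrix.toEuclideanLin A (X' t)) := by
    simp [Matrix.toEuclideanLin_apply, Matrix.mulVec_mulVec]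
  have hAT : (Aᵀ : Matrix (Fin n) (Fin m) ℝ) = Aᴴ :=
    (Matrix.conjTranspose_eq_transpose_of_trivial A).symm
  have hinner : (InnerProductSpace.toDual ℝ _ (gradient V (X t))) (X' t)
      = -‖Matrix.toEuclideanLin A (X' t)‖ ^ 2 := by
    rw [InnerProductSpace.toDual_apply_apply, hgradval, hmul, inner_neg_left, hAT,
      Matrix.toEuclideanLin_conjTranspose_eq_adjoint, LinearMap.adjoint_inner_left,
      real_inner_self_eq_norm_sq]
  rw [hinner] at hcomp
  exact hcomp
end

section
/- Let X : I → ℝⁿ be a continuously differentiable solution of the ADMM flow AᵀA Ẋ(t) + ∇V(X(t)) = 0 on an interval I. If ∇V(X(t)) ≠ 0 at some t ∈ I, then the derivative of s ↦ V(X(s)) at s = t is strictly negative. -/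
open Matrix Set

/-- **Strict decrease of `V` along the ADMM flow away from stationary points.**
If `X` is a continuously differentiable solution of the ADMM flow
`AᵀA Ẋ(t) + ∇V(X(t)) = 0` on an interval `I` and `∇V(X(t)) ≠ 0` at some `t ∈ I`,
then the derivative of `s ↦ V(X(s))` at `s = t` is strictly negative. -/
theorem admm_flow_strict_decrease
    {m n : ℕ} (hmn : n ≤ m)
    (f : EuclideanSpace ℝ (Fin n) → ℝ) (g : EuclideanSpace ℝ (Fin m) → ℝ)
    (hf : ContDiff ℝ 1 f) (hg : ContDiff ℝ 1 g)
    (hfconv : ConvexOn ℝ Set.univ f) (hgconv : ConvexOn ℝ Set.univ g)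
    (A : Matrix (Fin m) (Fin n) ℝ) (hA : A.rank = n)
    (V : EuclideanSpace ℝ (Fin n) → ℝ)
    (hV : ∀ x, V x = f x + g (Matrix.toEuclideanLin A x))
    (I : Set ℝ) (hI : I.OrdConnected)
    (X X' : ℝ → EuclideanSpace ℝ (Fin n))
    (hX : ∀ t ∈ I, HasDerivAt X (X' t) t)
    (hX' : ContinuousOn X' I)
    (hflow : ∀ t ∈ I,
      Matrix.toEuclideanLin (Aᵀ * A) (X' t) + gradient V (X t) = 0)
    (t : ℝ) (ht : t ∈ I) (hgrad : gradient V (X t) ≠ 0) :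
    deriv (fun s => V (X s)) t < 0 := by
  classical
  set L : EuclideanSpace ℝ (Fin n) →ₗ[ℝ] EuclideanSpace ℝ (Fin m) :=
    Matrix.toEuclideanLin A with hL
  -- V is differentiable
  have hVeq : V = fun x => f x + g (L.toContinuousLinearMap x) := by
    funext x; simp [hV x, hL]
  have hdV : Differentiable ℝ V := by
    rw [hVeq]
    exact (hf.differentiable one_ne_zero).add
      ((hg.differentiable one_ne_zero).comp L.toContinuousLinearMap.differentiable)
  set v := X' t with hv
  set x := X t with hx
  -- the flow equation
  have hfl : Matrix.toEuclideanLin (Aᵀ * A) v = -(gradient V x) :=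
    eq_neg_of_add_eq_zero_left (hflow t ht)
  -- AᵀA = adjoint L ∘ L
  have hadj : Matrix.toEuclideanLin (Aᵀ * A) = (LinearMap.adjoint L) ∘ₗ L := by
    rw [hL, ← Matrix.toEuclideanLin_conjTranspose_eq_adjoint,
      ← Matrix.conjTranspose_eq_transpose_of_trivial A]
    rw [Matrix.toEuclideanLin_eq_toLin, Matrix.toLin_mul _ (PiLp.basisFun 2 ℝ (Fin m)) _]
    rw [Matrix.toEuclideanLin_eq_toLin, Matrix.toEuclideanLin_eq_toLin]
  -- derivative of V ∘ X
  have hder : HasDerivAt (fun s => V (X s)) (inner ℝ (gradient V x) v : ℝ) t := by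
    have hG : HasGradientAt V (gradient V x) x := (hdV x).hasGradientAt
    have hF := hasGradientAt_iff_hasFDerivAt.mp hG
    have := hF.comp_hasDerivAt t (hX t ht)
    simp at this ⊢
    exact this
  have hderiv : deriv (fun s => V (X s)) t = inner ℝ (gradient V x) v := hder.deriv
  rw [hderiv]
  have h1 : gradient V x = -((LinearMap.adjoint L) (L v)) := by
    have h2 : gradient V x = -(Matrix.toEuclideanLin (Aᵀ * A) v) := by
      rw [hfl, neg_neg]
    rw [hadj] at h2
    exact h2
  have key : (inner ℝ (gradient V x) v : ℝ) = - ‖L v‖ ^ 2 := by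
    rw [h1]
    rw [inner_neg_left]
    rw [LinearMap.adjoint_inner_left]
    rw [real_inner_self_eq_norm_sq]
  rw [key]
  have hLv : L v ≠ 0 := by
    intro h0
    apply hgrad
    rw [h1, h0, map_zero, neg_zero]
  have hp : (0:ℝ) < ‖L v‖ := norm_pos_iff.mpr hLv
  have : 0 < ‖L v‖ ^ 2 := by positivity
  linarith
end

section
/- Let X⋆ be a strict local minimizer and isolated stationary point of V, i.e., there is an open set O ⊆ ℝⁿ containing X⋆ such that ∇V(X) ≠ 0 and V(X) > V(X⋆) for all X ∈ O \ {X⋆}. Then X⋆ is an asymptotically stable critical point of the ADMM flow: for every ε > 0 with the closed ball of radius ε around X⋆ contained in O, there exists δ > 0 such that every continuously differentiable solution X : [t₀, ∞) → ℝⁿ of AᵀA Ẋ(t) + ∇V(X(t)) = 0 with ‖X(t₀) − X⋆‖ < δ satisfies ‖X(t) − X⋆‖ < ε for all t ≥ t₀ and moreover X(t) → X⋆ as t → ∞. -/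
open Matrix Set Filter

lemma admm_aux_inner {m n : ℕ} (A : Matrix (Fin m) (Fin n) ℝ)
    (v w : EuclideanSpace ℝ (Fin n)) :
    (inner ℝ (Matrix.toEuclideanLin (Aᵀ * A) v) w : ℝ) =
      inner ℝ (Matrix.toEuclideanLin A v) (Matrix.toEuclideanLin A w) := by
  have h : (Aᵀ * A) = Aᴴ * A := by
    rw [Matrix.conjTranspose_eq_transpose_of_trivial]
  rw [h]
  have h2 : Matrix.toEuclideanLin (Aᴴ * A)
      = (Matrix.toEuclideanLin Aᴴ).comp (Matrix.toEuclideanLin A) := by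
    ext x
    simp [Matrix.toEuclideanLin_apply, Matrix.mulVec_mulVec]
  rw [h2]
  simp only [LinearMap.comp_apply, Matrix.toEuclideanLin_conjTranspose_eq_adjoint]
  rw [LinearMap.adjoint_inner_left]

lemma admm_aux_inj {m n : ℕ} (A : Matrix (Fin m) (Fin n) ℝ) (hA : A.rank = n) :
    Function.Injective (Matrix.toEuclideanLin A) := by
  have h1 : LinearMap.ker A.mulVecLin = ⊥ := by
    have h2 := LinearMap.finrank_range_add_finrank_ker A.mulVecLin
    rw [Matrix.rank] at hA
    rw [hA, Module.finrank_fintype_fun_eq_card] at h2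
    simp only [Fintype.card_fin] at h2
    exact Submodule.finrank_eq_zero.mp (by omega)
  have hinj : Function.Injective A.mulVecLin := by rwa [← LinearMap.ker_eq_bot]
  intro x y hxy
  apply (WithLp.equiv 2 _).injective
  apply hinj
  have := congrArg (WithLp.equiv 2 _) hxy
  simpa [Matrix.toEuclideanLin_apply] using this

lemma admm_aux_antilip {n m : ℕ} (L : EuclideanSpace ℝ (Fin n) →ₗ[ℝ] EuclideanSpace ℝ (Fin m))
    (hL : Function.Injective L) : ∃ K > (0:ℝ), ∀ v, ‖v‖ ≤ K * ‖L v‖ := by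
  let e : EuclideanSpace ℝ (Fin n) ≃ₗ[ℝ] LinearMap.range L := LinearEquiv.ofInjective L hL
  let ec := e.toContinuousLinearEquiv
  let c : ↥(LinearMap.range L) →L[ℝ] EuclideanSpace ℝ (Fin n) := ec.symm
  refine ⟨‖c‖ + 1, by positivity, fun v => ?_⟩
  calc ‖v‖ = ‖c (ec v)‖ := by
        have : c (ec v) = ec.symm (ec v) := rfl
        rw [this, ec.symm_apply_apply]
    _ ≤ ‖c‖ * ‖ec v‖ := c.le_opNorm _
    _ ≤ (‖c‖ + 1) * ‖L v‖ := by
        have h2 : ‖ec v‖ = ‖L v‖ := rfl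
        rw [h2]; nlinarith [norm_nonneg (L v), norm_nonneg c]

lemma admm_aux_antitone (t₀ : ℝ) (φ φ' : ℝ → ℝ)
    (hd : ∀ t ∈ Ici t₀, HasDerivAt φ (φ' t) t)
    (hneg : ∀ t ∈ Ici t₀, φ' t ≤ 0) : AntitoneOn φ (Ici t₀) := by
  apply antitoneOn_of_deriv_nonpos (convex_Ici t₀)
  · exact fun t ht => (hd t ht).continuousAt.continuousWithinAt
  · intro t ht
    rw [interior_Ici] at ht
    exact (hd t (mem_Ici.mpr (le_of_lt (mem_Ioi.mp ht)))).differentiableAt.differentiableWithinAt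
  · intro t ht
    rw [interior_Ici] at ht
    rw [(hd t (mem_Ici.mpr (le_of_lt (mem_Ioi.mp ht)))).deriv]
    exact hneg t (mem_Ici.mpr (le_of_lt (mem_Ioi.mp ht)))

set_option maxHeartbeats 1000000 in
/-- **Asymptotic stability of strict isolated minimizers for the ADMM flow.**
Let `X⋆` be a strict local minimizer and isolated stationary point of `V`, i.e. there is
an open set `O` containing `X⋆` with `∇V(X) ≠ 0` and `V(X) > V(X⋆)` for all
`X ∈ O \ {X⋆}`. Then `X⋆` is an asymptotically stable critical point of the ADMM flow:
for every `ε > 0` such that the closed `ε`-ball around `X⋆` is contained in `O`,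
there is `δ > 0` such that every continuously differentiable solution `X : [t₀, ∞) → ℝⁿ`
of `AᵀA Ẋ(t) + ∇V(X(t)) = 0` with `‖X(t₀) − X⋆‖ < δ` remains in the open `ε`-ball around
`X⋆` for all `t ≥ t₀`, and `X(t) → X⋆` as `t → ∞`. -/
theorem admm_flow_asymptotic_stability
    {m n : ℕ} (hmn : n ≤ m)
    (f : EuclideanSpace ℝ (Fin n) → ℝ) (g : EuclideanSpace ℝ (Fin m) → ℝ)
    (hf : ContDiff ℝ 1 f) (hg : ContDiff ℝ 1 g)
    (hfconv : ConvexOn ℝ Set.univ f) (hgconv : ConvexOn ℝ Set.univ g)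
    (A : Matrix (Fin m) (Fin n) ℝ) (hA : A.rank = n)
    (V : EuclideanSpace ℝ (Fin n) → ℝ)
    (hV : ∀ x, V x = f x + g (Matrix.toEuclideanLin A x))
    (Xstar : EuclideanSpace ℝ (Fin n)) (O : Set (EuclideanSpace ℝ (Fin n)))
    (hO : IsOpen O) (hXO : Xstar ∈ O)
    (hstrict : ∀ x ∈ O \ {Xstar}, gradient V x ≠ 0 ∧ V Xstar < V x) :
    ∀ ε > (0 : ℝ), Metric.closedBall Xstar ε ⊆ O →
      ∃ δ > (0 : ℝ), ∀ (t₀ : ℝ) (X X' : ℝ → EuclideanSpace ℝ (Fin n)),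
        (∀ t ∈ Set.Ici t₀, HasDerivAt X (X' t) t) →
        ContinuousOn X' (Set.Ici t₀) →
        (∀ t ∈ Set.Ici t₀,
          Matrix.toEuclideanLin (Aᵀ * A) (X' t) + gradient V (X t) = 0) →
        ‖X t₀ - Xstar‖ < δ →
        (∀ t ∈ Set.Ici t₀, ‖X t - Xstar‖ < ε) ∧
          Tendsto X atTop (nhds Xstar) := by
  intro ε hε hsub
  -- trivial case n = 0
  rcases Nat.eq_zero_or_pos n with hn | hn
  · subst hn
    have hss : Subsingleton (EuclideanSpace ℝ (Fin 0)) := inferInstance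
    refine ⟨1, one_pos, fun t₀ X X' hX hX'c hode hinit => ?_⟩
    constructor
    · intro t ht
      have : X t - Xstar = 0 := Subsingleton.elim _ _
      rw [this, norm_zero]; exact hε
    · have hXeq : X = fun _ => Xstar := funext fun t => Subsingleton.elim _ _
      rw [hXeq]; exact tendsto_const_nhds
  -- main case
  have hVeq : V = fun x => f x + g (Matrix.toEuclideanLin A x) := funext hV
  have hVC : ContDiff ℝ 1 V := by
    rw [hVeq]
    exact hf.add (hg.comp ((Matrix.toEuclideanLin A).toContinuousLinearMap.contDiff))
  have hVcont : Continuous V := hVC.continuous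
  have hgradcont : Continuous (gradient V) := by
    have h1 : Continuous (fderiv ℝ V) := hVC.continuous_fderiv one_ne_zero
    have h2 : gradient V = fun x => (InnerProductSpace.toDual ℝ _).symm (fderiv ℝ V x) := rfl
    rw [h2]
    exact (InnerProductSpace.toDual ℝ _).symm.continuous.comp h1
  obtain ⟨K, hKpos, hK⟩ := admm_aux_antilip (Matrix.toEuclideanLin A)
    (admm_aux_inj A hA)
  set Pc : EuclideanSpace ℝ (Fin n) →L[ℝ] EuclideanSpace ℝ (Fin n) :=
    (Matrix.toEuclideanLin (Aᵀ * A)).toContinuousLinearMap with hPc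
  set C : ℝ := ‖Pc‖ + 1 with hC
  have hCpos : 0 < C := by positivity
  have hCbound : ∀ v, ‖Matrix.toEuclideanLin (Aᵀ * A) v‖ ≤ C * ‖v‖ := by
    intro v
    have h1 : Matrix.toEuclideanLin (Aᵀ * A) v = Pc v := rfl
    rw [h1, hC]
    have := Pc.le_opNorm v
    nlinarith [norm_nonneg v]
  have hVlb : ∀ x ∈ O, V Xstar ≤ V x := by
    intro x hx
    by_cases hxs : x = Xstar
    · rw [hxs]
    · exact le_of_lt (hstrict x ⟨hx, hxs⟩).2
  -- the minimum of V on the sphere of radius ε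
  have hNontriv : Nontrivial (EuclideanSpace ℝ (Fin n)) := by
    have : Nonempty (Fin n) := ⟨⟨0, hn⟩⟩
    infer_instance
  have hsphne : (Metric.sphere Xstar ε).Nonempty :=
    NormedSpace.sphere_nonempty.mpr (le_of_lt hε)
  obtain ⟨xμ, hxμmem, hxμmin⟩ := (isCompact_sphere Xstar ε).exists_isMinOn hsphne
    hVcont.continuousOn
  set μ : ℝ := V xμ with hμdef
  have hxμO : xμ ∈ O \ {Xstar} := by
    constructor
    · exact hsub (Metric.sphere_subset_closedBall hxμmem)
    · simp only [mem_singleton_iff]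
      intro hc
      rw [hc] at hxμmem
      simp only [Metric.mem_sphere, dist_self] at hxμmem
      exact (ne_of_gt hε) hxμmem.symm
  have hμgt : V Xstar < μ := (hstrict xμ hxμO).2
  -- choose δ
  have hμnhds : {x | V x < μ} ∈ nhds Xstar :=
    (isOpen_lt hVcont continuous_const).mem_nhds hμgt
  obtain ⟨δ', hδ'pos, hδ'sub⟩ := Metric.mem_nhds_iff.mp hμnhds
  refine ⟨min δ' ε, lt_min hδ'pos hε, fun t₀ X X' hX hX'c hode hinit => ?_⟩
  -- basic facts about the solution
  have hXc : ∀ t ∈ Ici t₀, ContinuousAt X t := fun t ht => (hX t ht).continuousAt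
  have hP : ∀ t ∈ Ici t₀,
      Matrix.toEuclideanLin (Aᵀ * A) (X' t) = -gradient V (X t) := by
    intro t ht
    have := hode t ht
    linear_combination (norm := module) this
  set VX' : ℝ → ℝ := fun t => inner ℝ (gradient V (X t)) (X' t) with hVX'def
  have hVXd : ∀ t ∈ Ici t₀, HasDerivAt (fun s => V (X s)) (VX' t) t := by
    intro t ht
    have hd : DifferentiableAt ℝ V (X t) := (hVC.differentiable one_ne_zero).differentiableAt
    have := hd.hasGradientAt.hasFDerivAt.comp_hasDerivAt t (hX t ht)
    have e : VX' t = InnerProductSpace.toDual ℝ _ (gradient V (X t)) (X' t) := rfl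
    rw [e]; exact this
  have hVX'val : ∀ t ∈ Ici t₀,
      VX' t = -‖Matrix.toEuclideanLin A (X' t)‖ ^ 2 := by
    intro t ht
    have h1 : gradient V (X t) = -(Matrix.toEuclideanLin (Aᵀ * A) (X' t)) := by
      rw [hP t ht]; simp
    rw [hVX'def]
    simp only []
    rw [h1, inner_neg_left, admm_aux_inner, real_inner_self_eq_norm_sq]
  have hVX'neg : ∀ t ∈ Ici t₀, VX' t ≤ 0 := by
    intro t ht
    rw [hVX'val t ht]
    exact neg_nonpos.mpr (by positivity)
  have hanti : AntitoneOn (fun s => V (X s)) (Ici t₀) :=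
    admm_aux_antitone t₀ _ VX' hVXd hVX'neg
  have hgrad_le : ∀ t ∈ Ici t₀,
      ‖gradient V (X t)‖ ≤ C * K * ‖Matrix.toEuclideanLin A (X' t)‖ := by
    intro t ht
    have h1 : ‖gradient V (X t)‖ = ‖Matrix.toEuclideanLin (Aᵀ * A) (X' t)‖ := by
      rw [hP t ht, norm_neg]
    rw [h1]
    calc ‖Matrix.toEuclideanLin (Aᵀ * A) (X' t)‖ ≤ C * ‖X' t‖ := hCbound _
      _ ≤ C * (K * ‖Matrix.toEuclideanLin A (X' t)‖) := by
          exact mul_le_mul_of_nonneg_left (hK _) (le_of_lt hCpos)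
      _ = C * K * ‖Matrix.toEuclideanLin A (X' t)‖ := by ring
  -- quantitative decay
  have hdecay : ∀ a > (0:ℝ), ∀ T ∈ Ici t₀, (∀ t ∈ Ici T, a ≤ ‖gradient V (X t)‖) →
      ∀ t ∈ Ici T, V (X t) ≤ V (X T) - (a / (C * K)) ^ 2 * (t - T) := by
    intro a ha T hT hlow t ht
    set b : ℝ := (a / (C * K)) ^ 2 with hb
    have hIci : Ici T ⊆ Ici t₀ := Ici_subset_Ici.mpr hT
    have hψd : ∀ s ∈ Ici T, HasDerivAt (fun u => V (X u) + b * u) (VX' s + b) s := by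
      intro s hs
      exact (hVXd s (hIci hs)).add (by simpa using (hasDerivAt_id s).const_mul b)
    have hψneg : ∀ s ∈ Ici T, VX' s + b ≤ 0 := by
      intro s hs
      have h1 := hVX'val s (hIci hs)
      have h2 := hgrad_le s (hIci hs)
      have h3 := hlow s hs
      have hCK : 0 < C * K := mul_pos hCpos hKpos
      have h4 : a / (C * K) ≤ ‖Matrix.toEuclideanLin A (X' s)‖ := by
        rw [div_le_iff₀ hCK]
        calc a ≤ ‖gradient V (X s)‖ := h3
          _ ≤ C * K * ‖Matrix.toEuclideanLin A (X' s)‖ := h2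
          _ = ‖Matrix.toEuclideanLin A (X' s)‖ * (C * K) := by ring
      have h5 : b ≤ ‖Matrix.toEuclideanLin A (X' s)‖ ^ 2 := by
        rw [hb]
        have h6 : 0 ≤ a / (C * K) := le_of_lt (div_pos ha hCK)
        nlinarith
      rw [h1]; linarith
    have hmono := admm_aux_antitone T _ _ hψd hψneg self_mem_Ici ht ht
    simp only [] at hmono
    linarith
  -- initial value below μ
  have hδε : ‖X t₀ - Xstar‖ < ε := lt_of_lt_of_le hinit (min_le_right _ _)
  have hV0 : V (X t₀) < μ := by
    apply hδ'sub
    rw [Metric.mem_ball, dist_eq_norm]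
    exact lt_of_lt_of_le hinit (min_le_left _ _)
  -- stability
  have hstab : ∀ t ∈ Ici t₀, ‖X t - Xstar‖ < ε := by
    by_contra hcon
    push_neg at hcon
    obtain ⟨t₁, ht₁, ht₁ε⟩ := hcon
    have hXcont : ContinuousOn (fun s => ‖X s - Xstar‖) (Icc t₀ t₁) := by
      apply ContinuousOn.norm
      apply ContinuousOn.sub _ continuousOn_const
      exact fun s hs => ((hXc s (mem_Ici.mpr hs.1)).continuousWithinAt)
    have hIVT := intermediate_value_Icc ht₁ hXcont
    have hεmem : ε ∈ Icc (‖X t₀ - Xstar‖) (‖X t₁ - Xstar‖) := ⟨le_of_lt hδε, ht₁ε⟩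
    obtain ⟨s, hs, hsval⟩ := hIVT hεmem
    have hsph : X s ∈ Metric.sphere Xstar ε := by
      rw [Metric.mem_sphere, dist_eq_norm]; exact hsval
    have h1 : μ ≤ V (X s) := hxμmin hsph
    have h2 : V (X s) ≤ V (X t₀) :=
      hanti self_mem_Ici (mem_Ici.mpr hs.1) hs.1
    linarith
  refine ⟨hstab, ?_⟩
  -- convergence
  have hXO' : ∀ t ∈ Ici t₀, X t ∈ O := by
    intro t ht
    apply hsub
    rw [Metric.mem_closedBall, dist_eq_norm]
    exact le_of_lt (hstab t ht)
  rw [Metric.tendsto_atTop]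
  intro r hr
  rcases le_or_gt ε r with hεr | hrε
  · refine ⟨t₀, fun t ht => ?_⟩
    rw [dist_eq_norm]
    exact lt_of_lt_of_le (hstab t (mem_Ici.mpr ht)) hεr
  -- r < ε : use annulus
  set Kr : Set (EuclideanSpace ℝ (Fin n)) :=
    Metric.closedBall Xstar ε \ Metric.ball Xstar r with hKrdef
  have hKrcomp : IsCompact Kr := by
    rw [hKrdef, diff_eq]
    exact (isCompact_closedBall Xstar ε).inter_right Metric.isOpen_ball.isClosed_compl
  have hKrsubO : Kr ⊆ O \ {Xstar} := by
    rintro x ⟨hx1, hx2⟩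
    refine ⟨hsub hx1, ?_⟩
    simp only [mem_singleton_iff]
    intro hc
    apply hx2
    rw [hc]
    exact Metric.mem_ball_self hr
  have hKrne : Kr.Nonempty := by
    refine ⟨xμ, Metric.sphere_subset_closedBall hxμmem, fun hmem => ?_⟩
    rw [Metric.mem_ball, Metric.mem_sphere.mp hxμmem] at hmem
    linarith
  obtain ⟨yμ, hyμmem, hyμmin⟩ := hKrcomp.exists_isMinOn hKrne hVcont.continuousOn
  set μr : ℝ := V yμ with hμrdef
  have hμrgt : V Xstar < μr := (hstrict yμ (hKrsubO hyμmem)).2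
  -- there is T with V (X T) < μr
  have hexT : ∃ T ∈ Ici t₀, V (X T) < μr := by
    by_contra hcon
    push_neg at hcon
    -- then X stays in an annulus where ‖∇V‖ ≥ a > 0
    have hμrnhds : {x | V x < μr} ∈ nhds Xstar :=
      (isOpen_lt hVcont continuous_const).mem_nhds hμrgt
    obtain ⟨r₂, hr₂pos, hr₂sub⟩ := Metric.mem_nhds_iff.mp hμrnhds
    set r₃ : ℝ := min r₂ r with hr₃def
    have hr₃pos : 0 < r₃ := lt_min hr₂pos hr
    set K2 : Set (EuclideanSpace ℝ (Fin n)) :=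
      Metric.closedBall Xstar ε \ Metric.ball Xstar r₃ with hK2def
    have hK2comp : IsCompact K2 := by
      rw [hK2def, diff_eq]
      exact (isCompact_closedBall Xstar ε).inter_right Metric.isOpen_ball.isClosed_compl
    have hK2subO : K2 ⊆ O \ {Xstar} := by
      rintro x ⟨hx1, hx2⟩
      refine ⟨hsub hx1, ?_⟩
      simp only [mem_singleton_iff]
      intro hc
      apply hx2
      rw [hc]
      exact Metric.mem_ball_self hr₃pos
    have hXK2 : ∀ t ∈ Ici t₀, X t ∈ K2 := by
      intro t ht
      constructor
      · rw [Metric.mem_closedBall, dist_eq_norm]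
        exact le_of_lt (hstab t ht)
      · intro hmem
        have h1 : X t ∈ Metric.ball Xstar r₂ :=
          Metric.ball_subset_ball (min_le_left r₂ r) hmem
        have h2 : V (X t) < μr := hr₂sub h1
        exact absurd h2 (not_lt.mpr (hcon t ht))
    have hK2ne : K2.Nonempty := ⟨X t₀, hXK2 t₀ self_mem_Ici⟩
    obtain ⟨za, hzamem, hzamin⟩ := hK2comp.exists_isMinOn hK2ne
      (hgradcont.norm.continuousOn)
    set a : ℝ := ‖gradient V za‖ with hadef
    have hapos : 0 < a := by
      rw [hadef]
      exact norm_pos_iff.mpr ((hstrict za (hK2subO hzamem)).1)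
    have hlow : ∀ t ∈ Ici t₀, a ≤ ‖gradient V (X t)‖ :=
      fun t ht => hzamin (hXK2 t ht)
    have hdec := hdecay a hapos t₀ self_mem_Ici hlow
    have hbpos : 0 < (a / (C * K)) ^ 2 :=
      pow_pos (div_pos hapos (mul_pos hCpos hKpos)) 2
    set t₂ : ℝ := t₀ + (V (X t₀) - V Xstar) / ((a / (C * K)) ^ 2) + 1 with ht₂def
    have hVd : 0 ≤ V (X t₀) - V Xstar := by
      have := hVlb (X t₀) (hXO' t₀ self_mem_Ici)
      linarith
    have ht₂mem : t₂ ∈ Ici t₀ := by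
      rw [ht₂def, mem_Ici]
      have : 0 ≤ (V (X t₀) - V Xstar) / ((a / (C * K)) ^ 2) :=
        div_nonneg hVd (le_of_lt hbpos)
      linarith
    have h1 := hdec t₂ ht₂mem
    have h2 := hVlb (X t₂) (hXO' t₂ ht₂mem)
    have h3 : t₂ - t₀ = (V (X t₀) - V Xstar) / ((a / (C * K)) ^ 2) + 1 := by
      rw [ht₂def]; ring
    rw [h3] at h1
    have h4 : (a / (C * K)) ^ 2 * ((V (X t₀) - V Xstar) / ((a / (C * K)) ^ 2) + 1)
        = (V (X t₀) - V Xstar) + (a / (C * K)) ^ 2 := by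
      field_simp
    linarith
  obtain ⟨T, hT, hVT⟩ := hexT
  refine ⟨T, fun t ht => ?_⟩
  have htIci : t ∈ Ici t₀ := le_trans hT ht
  have h1 : V (X t) ≤ V (X T) := hanti hT htIci ht
  have h2 : V (X t) < μr := lt_of_le_of_lt h1 hVT
  rw [dist_eq_norm]
  by_contra hcon
  push_neg at hcon
  have hXtKr : X t ∈ Kr := by
    constructor
    · rw [Metric.mem_closedBall, dist_eq_norm]
      exact le_of_lt (hstab t htIci)
    · intro hmem
      rw [Metric.mem_ball, dist_eq_norm] at hmem
      linarith
  exact absurd (hyμmin hXtKr) (not_le.mpr h2)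
end

section
/- Let r ≥ 3 and let X : [t₀, ∞) → ℝⁿ (with t₀ > 0) be a twice continuously differentiable solution of the A-ADMM flow AᵀA (Ẍ(t) + (r/t) Ẋ(t)) + ∇V(X(t)) = 0, and let X⋆ be a minimizer of V with V⋆ = V(X⋆). Then there exists a constant C > 0 such that V(X(t)) − V⋆ ≤ C/t² for all t ≥ t₀; one may take C = t₀²(V(X(t₀)) − V⋆) + ((r−1)²/2)·‖A(X(t₀) − X⋆ + (t₀/(r−1)) Ẋ(t₀))‖². -/
set_option maxHeartbeats 1000000

open Matrix Set InnerProductSpace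

local notation "⟪" x ", " y "⟫" => @inner ℝ _ _ x y

lemma convex_gradient_ineq {F : Type*} [NormedAddCommGroup F] [InnerProductSpace ℝ F]
    [CompleteSpace F]
    {V : F → ℝ} (hconv : ConvexOn ℝ Set.univ V) (hdiff : Differentiable ℝ V)
    (x y : F) : ⟪gradient V x, y - x⟫ ≤ V y - V x := by
  set φ : ℝ → ℝ := fun s => V (x + s • (y - x)) with hφdef
  have hφconv : ConvexOn ℝ Set.univ φ := by
    have h := hconv.comp_affineMap (AffineMap.lineMap x y : ℝ →ᵃ[ℝ] F)
    have he : φ = V ∘ (AffineMap.lineMap x y : ℝ →ᵃ[ℝ] F) := by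
      funext s
      simp only [φ, Function.comp_apply, AffineMap.lineMap_apply_module]
      congr 1
      module
    rw [he]
    simpa using h
  have hc : HasDerivAt (fun s : ℝ => x + s • (y - x)) (y - x) 0 := by
    simpa using ((hasDerivAt_id (0:ℝ)).smul_const (y - x)).const_add x
  have hφ' : HasDerivAt φ ⟪gradient V x, y - x⟫ 0 := by
    have hg := (hdiff (x + (0:ℝ) • (y - x))).hasGradientAt.hasFDerivAt
    have h := hg.comp_hasDerivAt 0 hc
    simpa [toDual_apply_apply, Function.comp_def] using h
  have := hφconv.le_slope_of_hasDerivWithinAt (mem_univ (0:ℝ)) (mem_univ (1:ℝ))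
    zero_lt_one hφ'.hasDerivWithinAt
  rw [slope_def_field] at this
  simpa [φ] using this

/-- **Convergence rate of the A-ADMM flow.**
Let `r ≥ 3` and let `X` be a twice continuously differentiable solution of the A-ADMM
flow `AᵀA(Ẍ(t) + (r/t)Ẋ(t)) + ∇V(X(t)) = 0` on `[t₀, ∞)` (with `t₀ > 0`), and let `X⋆`
be a minimizer of `V` with `V⋆ = V(X⋆)`. Then there is `C > 0` with
`V(X(t)) − V⋆ ≤ C/t²` for all `t ≥ t₀`; one may take
`C = t₀²(V(X(t₀)) − V⋆) + ((r−1)²/2)‖A(X(t₀) − X⋆ + (t₀/(r−1))Ẋ(t₀))‖²`. -/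
theorem aadmm_flow_convergence_rate
    {m n : ℕ} (hmn : n ≤ m)
    (f : EuclideanSpace ℝ (Fin n) → ℝ) (g : EuclideanSpace ℝ (Fin m) → ℝ)
    (hf : ContDiff ℝ 1 f) (hg : ContDiff ℝ 1 g)
    (hfconv : ConvexOn ℝ Set.univ f) (hgconv : ConvexOn ℝ Set.univ g)
    (A : Matrix (Fin m) (Fin n) ℝ) (hA : A.rank = n)
    (V : EuclideanSpace ℝ (Fin n) → ℝ)
    (hV : ∀ x, V x = f x + g (Matrix.toEuclideanLin A x))
    (r : ℝ) (hr : 3 ≤ r)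
    (t₀ : ℝ) (ht₀ : 0 < t₀)
    (X X' X'' : ℝ → EuclideanSpace ℝ (Fin n))
    (hX : ∀ t ∈ Set.Ici t₀, HasDerivAt X (X' t) t)
    (hX' : ∀ t ∈ Set.Ici t₀, HasDerivAt X' (X'' t) t)
    (hX'' : ContinuousOn X'' (Set.Ici t₀))
    (hflow : ∀ t ∈ Set.Ici t₀,
      Matrix.toEuclideanLin (Aᵀ * A) (X'' t + (r / t) • X' t) + gradient V (X t) = 0)
    (Xstar : EuclideanSpace ℝ (Fin n)) (hXstar : ∀ x, V Xstar ≤ V x)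
    (Vstar : ℝ) (hVstar : Vstar = V Xstar) :
    (∃ C > (0 : ℝ), ∀ t ∈ Set.Ici t₀, V (X t) - Vstar ≤ C / t ^ 2) ∧
      ∀ t ∈ Set.Ici t₀,
        V (X t) - Vstar ≤
          (t₀ ^ 2 * (V (X t₀) - Vstar)
            + ((r - 1) ^ 2 / 2) *
              ‖Matrix.toEuclideanLin A (X t₀ - Xstar + (t₀ / (r - 1)) • X' t₀)‖ ^ 2)
          / t ^ 2 := by
  have hr1 : (0:ℝ) < r - 1 := by linarith
  set L : EuclideanSpace ℝ (Fin n) →ₗ[ℝ] EuclideanSpace ℝ (Fin m) :=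
    Matrix.toEuclideanLin A with hLdef
  set Lc : EuclideanSpace ℝ (Fin n) →L[ℝ] EuclideanSpace ℝ (Fin m) :=
    LinearMap.toContinuousLinearMap L with hLcdef
  have hLc : ∀ x, Lc x = Matrix.toEuclideanLin A x := fun x => rfl
  -- differentiability and convexity of V
  have hVeq : V = fun x => f x + g (Lc x) := by funext x; rw [hV]; rfl
  have hVdiff : Differentiable ℝ V := by
    rw [hVeq]
    exact (hf.differentiable one_ne_zero).add
      ((hg.differentiable one_ne_zero).comp Lc.differentiable)
  have hVconv : ConvexOn ℝ Set.univ V := by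
    rw [hVeq]
    have h1 := hgconv.comp_affineMap (L.toAffineMap)
    refine hfconv.add ?_
    have e : (fun x => g (Lc x)) = g ∘ ⇑L := rfl
    rw [e]
    exact (by simpa using h1)
  -- chain rule helper
  have hchain : ∀ (c : ℝ → EuclideanSpace ℝ (Fin n)) (c' : EuclideanSpace ℝ (Fin n)) (t : ℝ),
      HasDerivAt c c' t → HasDerivAt (fun s => V (c s)) ⟪gradient V (c t), c'⟫ t := by
    intro c c' t hc
    have hg := (hVdiff (c t)).hasGradientAt.hasFDerivAt
    have h := hg.comp_hasDerivAt t hc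
    simpa [toDual_apply_apply, Function.comp_def] using h
  -- adjoint identity
  have hadj : ∀ u v, ⟪Lc u, Lc v⟫ = ⟪u, Matrix.toEuclideanLin (Aᵀ * A) v⟫ := by
    intro u v
    have h1 : Matrix.toEuclideanLin (Aᵀ * A) v
        = Matrix.toEuclideanLin Aᵀ (Matrix.toEuclideanLin A v) := by
      simp only [Matrix.toEuclideanLin_apply]
      simp [Matrix.mulVec_mulVec]
    have h2 : Matrix.toEuclideanLin Aᵀ = LinearMap.adjoint (Matrix.toEuclideanLin A) := by
      rw [← Matrix.toEuclideanLin_conjTranspose_eq_adjoint,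
        Matrix.conjTranspose_eq_transpose_of_trivial]
    rw [h1, h2, LinearMap.adjoint_inner_right]
    rfl
  -- the Lyapunov function
  set W : ℝ → EuclideanSpace ℝ (Fin n) :=
    fun t => X t - Xstar + (t / (r - 1)) • X' t with hWdef
  set W' : ℝ → EuclideanSpace ℝ (Fin n) :=
    fun t => X' t + ((t / (r - 1)) • X'' t + (1 / (r - 1)) • X' t) with hW'def
  set En : ℝ → ℝ :=
    fun t => t ^ 2 * (V (X t) - Vstar) + ((r - 1) ^ 2 / 2) * ⟪Lc (W t), Lc (W t)⟫
    with hEndef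
  set En' : ℝ → ℝ := fun t =>
    t ^ 2 * ⟪gradient V (X t), X' t⟫ + 2 * t * (V (X t) - Vstar)
      + ((r - 1) ^ 2 / 2) * (⟪Lc (W t), Lc (W' t)⟫ + ⟪Lc (W' t), Lc (W t)⟫)
    with hEn'def
  have hW : ∀ t ∈ Ici t₀, HasDerivAt W (W' t) t := by
    intro t ht
    have h := ((hX t ht).sub_const Xstar).add
      (((hasDerivAt_id t).div_const (r - 1)).smul (hX' t ht))
    exact h
  have hEn : ∀ t ∈ Ici t₀, HasDerivAt En (En' t) t := by
    intro t ht
    have h1 := (hasDerivAt_pow 2 t).mul ((hchain X (X' t) t (hX t ht)).sub_const Vstar)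
    have hLW : HasDerivAt (fun s => Lc (W s)) (Lc (W' t)) t :=
      Lc.hasFDerivAt.comp_hasDerivAt t (hW t ht)
    have h2 := (hLW.inner ℝ hLW).const_mul ((r - 1) ^ 2 / 2)
    have h := h1.add h2
    exact h.congr_deriv (by simp [hEn'def]; ring)
  have hEn'le : ∀ t ∈ Ici t₀, En' t ≤ 0 := by
    intro t ht
    have ht0 : 0 < t := lt_of_lt_of_le ht₀ ht
    set G := gradient V (X t) with hGdef
    have hT : Matrix.toEuclideanLin (Aᵀ * A) (X'' t + (r / t) • X' t) = -G :=
      eq_neg_of_add_eq_zero_left (hflow t ht)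
    have hscal : t / (r - 1) * (r / t) = 1 + 1 / (r - 1) := by
      field_simp
      ring
    have hW'eq : W' t = (t / (r - 1)) • (X'' t + (r / t) • X' t) := by
      rw [hW'def]
      simp only [smul_add, smul_smul, hscal, add_smul, one_smul]
      abel
    have hinner : ⟪Lc (W t), Lc (W' t)⟫ = -(t / (r - 1) * ⟪W t, G⟫) := by
      rw [hadj, hW'eq, _root_.map_smul, hT, real_inner_smul_right, inner_neg_right]
      ring
    have hWG : ⟪W t, G⟫ = ⟪X t - Xstar, G⟫ + t / (r - 1) * ⟪X' t, G⟫ := by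
      show ⟪X t - Xstar + (t / (r - 1)) • X' t, G⟫ = _
      rw [inner_add_left, real_inner_smul_left]
    have hcvx : V (X t) - Vstar ≤ ⟪X t - Xstar, G⟫ := by
      have h := convex_gradient_ineq hVconv hVdiff (X t) Xstar
      have h' : ⟪G, Xstar - X t⟫ = -⟪X t - Xstar, G⟫ := by
        rw [real_inner_comm, show Xstar - X t = -(X t - Xstar) by abel, inner_neg_left]
      rw [hGdef] at h' ⊢
      rw [h'] at h
      rw [hVstar]
      linarith
    have hpos : 0 ≤ V (X t) - Vstar := by rw [hVstar]; linarith [hXstar (X t)]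
    have hsym : ⟪Lc (W' t), Lc (W t)⟫ = -(t / (r - 1) * ⟪W t, G⟫) := by
      exact (real_inner_comm _ _).trans hinner
    have hg1 : ⟪gradient V (X t), X' t⟫ = ⟪X' t, G⟫ := real_inner_comm _ _
    have hEe : En' t = 2 * t * (V (X t) - Vstar) - (r - 1) * t * ⟪X t - Xstar, G⟫ := by
      rw [hEn'def]
      simp only
      rw [hg1, hinner, hsym, hWG]
      field_simp
      ring
    rw [hEe]
    nlinarith [mul_nonneg ht0.le hpos, mul_nonneg ht0.le (hpos.trans hcvx),
      mul_nonneg ht0.le (sub_nonneg.mpr hcvx)]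
  have hcont : ContinuousOn En (Ici t₀) := fun t ht =>
    ((hEn t ht).differentiableAt.continuousAt).continuousWithinAt
  have hanti : AntitoneOn En (Ici t₀) := by
    refine antitoneOn_of_deriv_nonpos (convex_Ici t₀) hcont ?_ ?_
    · intro t ht
      rw [interior_Ici] at ht
      exact (hEn t (mem_Ici.mpr (le_of_lt ht))).differentiableAt.differentiableWithinAt
    · intro t ht
      rw [interior_Ici] at ht
      rw [(hEn t (mem_Ici.mpr (le_of_lt ht))).deriv]
      exact hEn'le t (mem_Ici.mpr (le_of_lt ht))
  set C₀ : ℝ := t₀ ^ 2 * (V (X t₀) - Vstar)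
      + ((r - 1) ^ 2 / 2) *
        ‖Matrix.toEuclideanLin A (X t₀ - Xstar + (t₀ / (r - 1)) • X' t₀)‖ ^ 2 with hC₀def
  have hEnt₀ : En t₀ = C₀ := by
    rw [hEndef, hC₀def]
    simp only
    rw [real_inner_self_eq_norm_sq, hLc]
  have key : ∀ t ∈ Ici t₀, V (X t) - Vstar ≤ C₀ / t ^ 2 := by
    intro t ht
    have ht0 : 0 < t := lt_of_lt_of_le ht₀ ht
    have h1 : En t ≤ En t₀ := hanti self_mem_Ici ht ht
    have h2 : t ^ 2 * (V (X t) - Vstar) ≤ En t := by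
      rw [hEndef]
      simp only
      have hnn : (0:ℝ) ≤ ⟪Lc (W t), Lc (W t)⟫ := real_inner_self_nonneg
      nlinarith [sq_nonneg (r - 1)]
    rw [le_div_iff₀ (by positivity)]
    nlinarith [hEnt₀ ▸ h1]
  have hC₀nn : 0 ≤ C₀ := by
    have : 0 ≤ V (X t₀) - Vstar := by rw [hVstar]; linarith [hXstar (X t₀)]
    have h2 : (0:ℝ) ≤ ((r - 1) ^ 2 / 2) *
        ‖Matrix.toEuclideanLin A (X t₀ - Xstar + (t₀ / (r - 1)) • X' t₀)‖ ^ 2 := by positivity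
    have h1 : 0 ≤ t₀ ^ 2 * (V (X t₀) - Vstar) := mul_nonneg (sq_nonneg t₀) this
    rw [hC₀def]
    linarith
  refine ⟨⟨C₀ + 1, by linarith, fun t ht => ?_⟩, key⟩
  have ht0 : 0 < t := lt_of_lt_of_le ht₀ ht
  refine (key t ht).trans ?_
  exact (div_le_div_iff_of_pos_right (by positivity)).mpr (by linarith)
end

section
/- Let r > 1 and let X : [t₀, ∞) → ℝⁿ (with t₀ > 0) be a twice continuously differentiable solution of the A-ADMM flow AᵀA (Ẍ(t) + (r/t) Ẋ(t)) + ∇V(X(t)) = 0, let X⋆ be a minimizer of V, and define ℰ(t) = (t/(r−1))²·(V(X(t)) − V(X⋆)) + ½‖A(X(t) − X⋆ + (t/(r−1)) Ẋ(t))‖². Then for all t ≥ t₀, ℰ̇(t) ≤ −(t(r−3)/(r−1)²)·(V(X(t)) − V(X⋆)); in particular, if r ≥ 3 then ℰ is nonincreasing on [t₀, ∞). -/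
open Matrix Set

lemma aadmm_inner_aux {m n : ℕ} (A : Matrix (Fin m) (Fin n) ℝ)
    (u v : EuclideanSpace ℝ (Fin n)) :
    (inner ℝ (Matrix.toEuclideanLin A u) (Matrix.toEuclideanLin A v) : ℝ)
      = inner ℝ u (Matrix.toEuclideanLin (Aᵀ * A) v) := by
  have h1 : Matrix.toEuclideanLin (Aᵀ * A) v
      = Matrix.toEuclideanLin Aᵀ (Matrix.toEuclideanLin A v) := by
    simp [Matrix.toEuclideanLin_apply, Matrix.mulVec_mulVec]
  rw [h1, ← Matrix.conjTranspose_eq_transpose_of_trivial,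
    Matrix.toEuclideanLin_conjTranspose_eq_adjoint]
  exact (LinearMap.adjoint_inner_right _ _ _).symm

lemma aadmm_grad_ineq {N : ℕ} {V : EuclideanSpace ℝ (Fin N) → ℝ}
    (hconv : ConvexOn ℝ Set.univ V)
    {x G : EuclideanSpace ℝ (Fin N)} (hG : HasGradientAt V G x)
    (y : EuclideanSpace ℝ (Fin N)) :
    V x + (inner ℝ G (y - x) : ℝ) ≤ V y := by
  set φ : ℝ → ℝ := fun s => V (x + s • (y - x)) with hφ
  have hconvφ : ConvexOn ℝ Set.univ φ := by
    have h := hconv.comp_affineMap (AffineMap.lineMap x y)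
    have : (AffineMap.lineMap x y : ℝ →ᵃ[ℝ] _) ⁻¹' Set.univ = Set.univ := by simp
    rw [this] at h
    have hφeq : φ = V ∘ AffineMap.lineMap x y := by
      funext s
      simp [hφ, AffineMap.lineMap_apply]
      abel_nf
    rw [hφeq]
    exact h
  have h1 : HasDerivAt (fun s : ℝ => x + s • (y - x)) (y - x) 0 := by
    simpa using (((hasDerivAt_id (0:ℝ)).smul_const (y - x)).const_add x)
  have hd : HasDerivAt φ (inner ℝ G (y - x) : ℝ) 0 := by
    have := (hG.hasFDerivAt.comp_hasDerivAt_of_eq 0 h1 (by simp))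
    simp at this
    exact this
  have h2 := hconvφ.le_slope_of_hasDerivWithinAt_Ioi (Set.mem_univ (0:ℝ))
    (Set.mem_univ (1:ℝ)) one_pos hd.hasDerivWithinAt
  have hφ1 : φ 1 = V y := by simp [hφ]
  have hφ0 : φ 0 = V x := by simp [hφ]
  rw [slope_def_field, hφ1, hφ0] at h2
  rw [show (1:ℝ)-0 = 1 by norm_num, div_one] at h2
  linarith

/-- **Derivative bound on the Lyapunov function of the A-ADMM flow.**
Let `r > 1` and let `X` be a twice continuously differentiable solution of the A-ADMM
flow `AᵀA(Ẍ(t) + (r/t)Ẋ(t)) + ∇V(X(t)) = 0` on `[t₀, ∞)` (with `t₀ > 0`), let `X⋆` be a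
minimizer of `V`, and let
`ℰ(t) = (t/(r−1))²(V(X(t)) − V(X⋆)) + ½‖A(X(t) − X⋆ + (t/(r−1))Ẋ(t))‖²`.
Then for all `t ≥ t₀`, `ℰ̇(t) ≤ −(t(r−3)/(r−1)²)(V(X(t)) − V(X⋆))`; in particular,
if `r ≥ 3` then `ℰ` is nonincreasing on `[t₀, ∞)`. -/
theorem aadmm_flow_lyapunov_derivative_bound
    {m n : ℕ} (hmn : n ≤ m)
    (f : EuclideanSpace ℝ (Fin n) → ℝ) (g : EuclideanSpace ℝ (Fin m) → ℝ)
    (hf : ContDiff ℝ 1 f) (hg : ContDiff ℝ 1 g)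
    (hfconv : ConvexOn ℝ Set.univ f) (hgconv : ConvexOn ℝ Set.univ g)
    (A : Matrix (Fin m) (Fin n) ℝ) (hA : A.rank = n)
    (V : EuclideanSpace ℝ (Fin n) → ℝ)
    (hV : ∀ x, V x = f x + g (Matrix.toEuclideanLin A x))
    (r : ℝ) (hr : 1 < r)
    (t₀ : ℝ) (ht₀ : 0 < t₀)
    (X X' X'' : ℝ → EuclideanSpace ℝ (Fin n))
    (hX : ∀ t ∈ Set.Ici t₀, HasDerivAt X (X' t) t)
    (hX' : ∀ t ∈ Set.Ici t₀, HasDerivAt X' (X'' t) t)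
    (hX'' : ContinuousOn X'' (Set.Ici t₀))
    (hflow : ∀ t ∈ Set.Ici t₀,
      Matrix.toEuclideanLin (Aᵀ * A) (X'' t + (r / t) • X' t) + gradient V (X t) = 0)
    (Xstar : EuclideanSpace ℝ (Fin n)) (hXstar : ∀ x, V Xstar ≤ V x)
    (E : ℝ → ℝ)
    (hE : ∀ t, E t = (t / (r - 1)) ^ 2 * (V (X t) - V Xstar)
      + (1 / 2) *
        ‖Matrix.toEuclideanLin A (X t - Xstar + (t / (r - 1)) • X' t)‖ ^ 2) :
    (∀ t ∈ Set.Ici t₀, ∃ d : ℝ, HasDerivAt E d t ∧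
        d ≤ -(t * (r - 3) / (r - 1) ^ 2) * (V (X t) - V Xstar)) ∧
      (3 ≤ r → AntitoneOn E (Set.Ici t₀)) := by
  have hs : (0:ℝ) < r - 1 := by linarith
  have hsne : r - 1 ≠ 0 := ne_of_gt hs
  have hVfun : V = fun x => f x + g (Matrix.toEuclideanLin A x) := funext hV
  set Ac : EuclideanSpace ℝ (Fin n) →L[ℝ] EuclideanSpace ℝ (Fin m) :=
    LinearMap.toContinuousLinearMap (Matrix.toEuclideanLin A) with hAc
  have hVd : ContDiff ℝ 1 V := by
    rw [hVfun]
    exact hf.add (hg.comp Ac.contDiff)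
  have hgrad : ∀ x, HasGradientAt V (gradient V x) x := fun x =>
    ((hVd.differentiable one_ne_zero) x).hasGradientAt
  have hVconv : ConvexOn ℝ Set.univ V := by
    rw [hVfun]
    have h := hgconv.comp_linearMap (Matrix.toEuclideanLin A)
    exact hfconv.add h
  have key : ∀ t ∈ Set.Ici t₀, ∃ d : ℝ, HasDerivAt E d t ∧
      d ≤ -(t * (r - 3) / (r - 1) ^ 2) * (V (X t) - V Xstar) := by
    intro t ht
    have htpos : 0 < t := lt_of_lt_of_le ht₀ ht
    have htne : t ≠ 0 := ne_of_gt htpos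
    set G : EuclideanSpace ℝ (Fin n) := gradient V (X t) with hG
    set w : ℝ → EuclideanSpace ℝ (Fin n) :=
      fun τ => X τ - Xstar + (τ / (r - 1)) • X' τ with hw
    have hwd : HasDerivAt w
        (X' t + ((t / (r - 1)) • X'' t + (1 / (r - 1)) • X' t)) t :=
      ((hX t ht).sub_const Xstar).add
        (((hasDerivAt_id t).div_const (r - 1)).smul (hX' t ht))
    set w' : EuclideanSpace ℝ (Fin n) :=
      X' t + ((t / (r - 1)) • X'' t + (1 / (r - 1)) • X' t) with hw'
    have hVXd : HasDerivAt (fun τ => V (X τ)) ((inner ℝ G (X' t) : ℝ)) t := by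
      have h := (hgrad (X t)).hasFDerivAt.comp_hasDerivAt t (hX t ht)
      simp only [InnerProductSpace.toDual_apply_apply] at h
      exact h
    have hsq : HasDerivAt (fun τ : ℝ => (τ / (r - 1)) ^ 2)
        ((2:ℕ) * (t / (r - 1)) ^ 1 * (1 / (r - 1))) t :=
      ((hasDerivAt_id t).div_const (r - 1)).pow 2
    have h3 : HasDerivAt (fun τ => (τ / (r - 1)) ^ 2 * (V (X τ) - V Xstar))
        ((2:ℕ) * (t / (r - 1)) ^ 1 * (1 / (r - 1)) * (V (X t) - V Xstar)
          + (t / (r - 1)) ^ 2 * (inner ℝ G (X' t) : ℝ)) t :=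
      hsq.mul (hVXd.sub_const (V Xstar))
    have hud : HasDerivAt (fun τ => Ac (w τ)) (Ac w') t :=
      Ac.hasFDerivAt.comp_hasDerivAt t hwd
    have hnorm : HasDerivAt (fun τ => (inner ℝ (Ac (w τ)) (Ac (w τ)) : ℝ))
        ((inner ℝ (Ac (w t)) (Ac w') : ℝ) + (inner ℝ (Ac w') (Ac (w t)) : ℝ)) t :=
      HasDerivAt.inner ℝ hud hud
    have hEeq : E = fun τ => (τ / (r - 1)) ^ 2 * (V (X τ) - V Xstar)
        + (1 / 2) * (inner ℝ (Ac (w τ)) (Ac (w τ)) : ℝ) := by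
      funext τ
      rw [hE τ, ← real_inner_self_eq_norm_sq]
      rfl
    have hEd : HasDerivAt E
        (((2:ℕ) * (t / (r - 1)) ^ 1 * (1 / (r - 1)) * (V (X t) - V Xstar)
          + (t / (r - 1)) ^ 2 * (inner ℝ G (X' t) : ℝ))
          + (1 / 2) * ((inner ℝ (Ac (w t)) (Ac w') : ℝ)
            + (inner ℝ (Ac w') (Ac (w t)) : ℝ))) t := by
      rw [hEeq]
      exact h3.add (hnorm.const_mul (1 / 2))
    refine ⟨_, hEd, ?_⟩
    -- rewrite the inner-product terms
    have hw'eq : w' = (t / (r - 1)) • (X'' t + (r / t) • X' t) := by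
      rw [smul_add, smul_smul]
      have hc : t / (r - 1) * (r / t) = 1 + 1 / (r - 1) := by
        field_simp
        ring
      rw [hc, add_smul, one_smul, hw']
      abel
    have hflowt : Matrix.toEuclideanLin (Aᵀ * A) (X'' t + (r / t) • X' t) = -G :=
      eq_neg_of_add_eq_zero_left (hflow t ht)
    have hAw : (inner ℝ (Ac (w t)) (Ac w') : ℝ)
        = -((t / (r - 1)) * ((inner ℝ G (X t - Xstar) : ℝ)
            + (t / (r - 1)) * (inner ℝ G (X' t) : ℝ))) := by
      have h1 : (inner ℝ (Ac (w t)) (Ac w') : ℝ)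
          = inner ℝ (w t) (Matrix.toEuclideanLin (Aᵀ * A) w') :=
        aadmm_inner_aux A (w t) w'
      have h2 : Matrix.toEuclideanLin (Aᵀ * A) w' = (t / (r - 1)) • (-G) := by
        rw [hw'eq, _root_.map_smul, hflowt]
      rw [h1, h2, real_inner_smul_right, inner_neg_right]
      have h4 : (inner ℝ (w t) G : ℝ)
          = (inner ℝ (X t - Xstar) G : ℝ) + (t / (r - 1)) * (inner ℝ (X' t) G : ℝ) := by
        show (inner ℝ (X t - Xstar + (t / (r - 1)) • X' t) G : ℝ) = _
        rw [inner_add_left, real_inner_smul_left]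
      rw [h4, real_inner_comm (X t - Xstar) G, real_inner_comm (X' t) G]
      ring
    have hAw2 : (inner ℝ (Ac w') (Ac (w t)) : ℝ) = (inner ℝ (Ac (w t)) (Ac w') : ℝ) :=
      real_inner_comm _ _
    -- gradient inequality from convexity
    have hgi : V (X t) - V Xstar ≤ (inner ℝ G (X t - Xstar) : ℝ) := by
      have h := aadmm_grad_ineq hVconv (hgrad (X t)) Xstar
      have h5 : (inner ℝ G (Xstar - X t) : ℝ) = -(inner ℝ G (X t - Xstar) : ℝ) := by
        rw [show Xstar - X t = -(X t - Xstar) from (neg_sub _ _).symm, inner_neg_right]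
      rw [h5] at h
      linarith
    have hΔ : 0 ≤ V (X t) - V Xstar := sub_nonneg.2 (hXstar _)
    set ΔV := V (X t) - V Xstar with hΔV
    set I1 := (inner ℝ G (X t - Xstar) : ℝ) with hI1
    set I2 := (inner ℝ G (X' t) : ℝ) with hI2
    have hmul : (t / (r - 1)) * ΔV ≤ (t / (r - 1)) * I1 :=
      mul_le_mul_of_nonneg_left hgi (le_of_lt (div_pos htpos hs))
    have heq : (2:ℝ) * (t / (r - 1)) * (1 / (r - 1)) * ΔV - (t / (r - 1)) * ΔV
        = -(t * (r - 3) / (r - 1) ^ 2) * ΔV := by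
      field_simp
      ring
    rw [hAw2, hAw]
    push_cast
    have hfinal : (2:ℝ) * (t / (r - 1)) ^ 1 * (1 / (r - 1)) * ΔV
          + (t / (r - 1)) ^ 2 * I2
          + 1 / 2 * (-((t / (r - 1)) * (I1 + (t / (r - 1)) * I2))
            + -((t / (r - 1)) * (I1 + (t / (r - 1)) * I2)))
        = 2 * (t / (r - 1)) * (1 / (r - 1)) * ΔV - (t / (r - 1)) * I1 := by
      ring
    rw [hfinal]
    linarith
  refine ⟨key, fun hr3 => ?_⟩
  have hcont : ContinuousOn E (Set.Ici t₀) := fun t ht =>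
    ((key t ht).choose_spec.1.differentiableAt.continuousAt).continuousWithinAt
  apply antitoneOn_of_deriv_nonpos (convex_Ici t₀) hcont
  · intro x hx
    rw [interior_Ici] at hx
    exact ((key x (le_of_lt (mem_Ioi.1 hx))).choose_spec.1).differentiableAt.differentiableWithinAt
  · intro x hx
    rw [interior_Ici] at hx
    obtain ⟨d, hd, hdle⟩ := key x (le_of_lt (mem_Ioi.1 hx))
    rw [hd.deriv]
    refine le_trans hdle ?_
    have h1 : 0 ≤ V (X x) - V Xstar := sub_nonneg.2 (hXstar _)
    have h2 : 0 ≤ x * (r - 3) / (r - 1) ^ 2 := by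
      have hx0 : 0 < x := lt_trans ht₀ hx
      apply div_nonneg (mul_nonneg (le_of_lt hx0) (by linarith)) (by positivity)
    have := mul_nonneg h2 h1
    linarith
end

section
/- Let r > 0 and let X⋆ be a strict local minimizer of V, i.e., there is an open set O ⊆ ℝⁿ containing X⋆ with V(X) > V(X⋆) for all X ∈ O \ {X⋆}. Then the point (X⋆, 0) is a stable critical point of the first-order system Ẏ₁ = Y₂, Ẏ₂ = −(r/t) Y₂ − (AᵀA)⁻¹ ∇V(Y₁) (equivalent to the A-ADMM flow): for every ε > 0 with the closed ε-ball around X⋆ contained in O, there exists δ > 0 such that every twice continuously differentiable solution X : [t₀, ∞) → ℝⁿ (t₀ > 0) of the A-ADMM flow with ‖X(t₀) − X⋆‖ < δ and ‖Ẋ(t₀)‖ < δ satisfies ‖X(t) − X⋆‖ < ε and ‖Ẋ(t)‖ < ε for all t ≥ t₀. -/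
open Matrix Set
open scoped RealInnerProductSpace

private lemma aadmm_inner_QA {m n : ℕ} (A : Matrix (Fin m) (Fin n) ℝ)
    (x y : EuclideanSpace ℝ (Fin n)) :
    ⟪Matrix.toEuclideanLin (Aᵀ * A) x, y⟫
      = ⟪Matrix.toEuclideanLin A x, Matrix.toEuclideanLin A y⟫ := by
  have comp : Matrix.toEuclideanLin (Aᵀ * A) x
      = Matrix.toEuclideanLin Aᵀ (Matrix.toEuclideanLin A x) := by
    simp [Matrix.toEuclideanLin_apply, Matrix.mulVec_mulVec]
  have h1 : Aᵀ = Aᴴ := (Matrix.conjTranspose_eq_transpose_of_trivial A).symm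
  rw [comp, h1, Matrix.toEuclideanLin_conjTranspose_eq_adjoint, LinearMap.adjoint_inner_left]

private lemma aadmm_A_inj {m n : ℕ} (A : Matrix (Fin m) (Fin n) ℝ) (hA : A.rank = n)
    {x : EuclideanSpace ℝ (Fin n)} (hx : x ≠ 0) : Matrix.toEuclideanLin A x ≠ 0 := by
  have hker : LinearMap.ker A.mulVecLin = ⊥ := by
    have h1 := LinearMap.finrank_range_add_finrank_ker A.mulVecLin
    rw [show Module.finrank ℝ (LinearMap.range A.mulVecLin) = A.rank from rfl, hA] at h1
    have h2 : Module.finrank ℝ (Fin n → ℝ) = n := by simp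
    rw [h2] at h1
    have h3 : Module.finrank ℝ (LinearMap.ker A.mulVecLin) = 0 := by omega
    exact Submodule.finrank_eq_zero.mp h3
  intro h
  apply hx
  have h4 : A *ᵥ (WithLp.equiv 2 (Fin n → ℝ) x) = 0 := by
    have := congrArg (WithLp.equiv 2 (Fin m → ℝ)) h
    simpa [Matrix.toEuclideanLin_apply] using this
  have h5 : (WithLp.equiv 2 (Fin n → ℝ)) x = 0 := by
    have hinj := LinearMap.ker_eq_bot.mp hker
    exact hinj (by simpa [Matrix.mulVecLin] using h4)
  simpa using congrArg (WithLp.equiv 2 (Fin n → ℝ)).symm h5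

private lemma aadmm_posdef_const {m n : ℕ} (A : Matrix (Fin m) (Fin n) ℝ) (hA : A.rank = n) :
    ∃ lam > (0:ℝ), ∀ x : EuclideanSpace ℝ (Fin n),
      lam * ‖x‖^2 ≤ ‖Matrix.toEuclideanLin A x‖^2 := by
  set T : EuclideanSpace ℝ (Fin n) →L[ℝ] EuclideanSpace ℝ (Fin m) :=
    LinearMap.toContinuousLinearMap (Matrix.toEuclideanLin A) with hT
  have hTapp : ∀ x, T x = Matrix.toEuclideanLin A x := fun x => rfl
  rcases isEmpty_or_nonempty (Fin n) with he | hne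
  · refine ⟨1, one_pos, fun x => ?_⟩
    have : x = 0 := Subsingleton.elim x 0
    simp [this]
  · have hnt : Nontrivial (EuclideanSpace ℝ (Fin n)) := by infer_instance
    have hsne : (Metric.sphere (0 : EuclideanSpace ℝ (Fin n)) 1).Nonempty :=
      NormedSpace.sphere_nonempty.mpr zero_le_one
    have hcont : Continuous fun x : EuclideanSpace ℝ (Fin n) => ‖T x‖^2 := by
      continuity
    obtain ⟨z, hz, hmin⟩ := (isCompact_sphere (0 : EuclideanSpace ℝ (Fin n)) 1).exists_isMinOn
      hsne hcont.continuousOn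
    have hz1 : ‖z‖ = 1 := by simpa using hz
    have hzne : z ≠ 0 := by intro h; rw [h] at hz1; simp at hz1
    have hlam : 0 < ‖T z‖^2 := by
      have h := aadmm_A_inj A hA hzne
      rw [← hTapp] at h
      have : 0 < ‖T z‖ := norm_pos_iff.mpr h
      positivity
    refine ⟨‖T z‖^2, hlam, fun x => ?_⟩
    rcases eq_or_ne x 0 with rfl | hx
    · simp
    · have hnx : (0:ℝ) < ‖x‖ := norm_pos_iff.mpr hx
      set u : EuclideanSpace ℝ (Fin n) := ‖x‖⁻¹ • x with hu
      have hus : u ∈ Metric.sphere (0 : EuclideanSpace ℝ (Fin n)) 1 := by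
        simp [hu, norm_smul, abs_of_pos (inv_pos.mpr hnx), inv_mul_cancel₀ hnx.ne']
      have h1 : ‖T z‖^2 ≤ ‖T u‖^2 := hmin hus
      have h2 : ‖T x‖ = ‖x‖ * ‖T u‖ := by
        rw [hu, T.map_smul, norm_smul, Real.norm_eq_abs, abs_of_pos (inv_pos.mpr hnx)]
        field_simp
      rw [← hTapp]
      calc ‖T z‖^2 * ‖x‖^2 ≤ ‖T u‖^2 * ‖x‖^2 := by nlinarith [sq_nonneg ‖x‖]
        _ = ‖T x‖^2 := by rw [h2]; ring

set_option maxHeartbeats 1000000 in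
/-- **Stability of strict local minimizers for the A-ADMM flow.**
Let `r > 0` and let `X⋆` be a strict local minimizer of `V`, i.e. there is an open set
`O` containing `X⋆` with `V(X) > V(X⋆)` for all `X ∈ O \ {X⋆}`. Then `(X⋆, 0)` is a
stable critical point of the first-order system equivalent to the A-ADMM flow: for
every `ε > 0` such that the closed `ε`-ball around `X⋆` is contained in `O`, there
exists `δ > 0` such that every twice continuously differentiable solution
`X : [t₀, ∞) → ℝⁿ` (with `t₀ > 0`) of the A-ADMM flow with `‖X(t₀) − X⋆‖ < δ` and
`‖Ẋ(t₀)‖ < δ` satisfies `‖X(t) − X⋆‖ < ε` and `‖Ẋ(t)‖ < ε` for all `t ≥ t₀`. -/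
theorem aadmm_flow_stability
    {m n : ℕ} (hmn : n ≤ m)
    (f : EuclideanSpace ℝ (Fin n) → ℝ) (g : EuclideanSpace ℝ (Fin m) → ℝ)
    (hf : ContDiff ℝ 1 f) (hg : ContDiff ℝ 1 g)
    (hfconv : ConvexOn ℝ Set.univ f) (hgconv : ConvexOn ℝ Set.univ g)
    (A : Matrix (Fin m) (Fin n) ℝ) (hA : A.rank = n)
    (V : EuclideanSpace ℝ (Fin n) → ℝ)
    (hV : ∀ x, V x = f x + g (Matrix.toEuclideanLin A x))
    (r : ℝ) (hr : 0 < r)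
    (Xstar : EuclideanSpace ℝ (Fin n)) (O : Set (EuclideanSpace ℝ (Fin n)))
    (hO : IsOpen O) (hXO : Xstar ∈ O)
    (hstrict : ∀ x ∈ O \ {Xstar}, V Xstar < V x) :
    ∀ ε > (0 : ℝ), Metric.closedBall Xstar ε ⊆ O →
      ∃ δ > (0 : ℝ), ∀ (t₀ : ℝ), 0 < t₀ →
        ∀ (X X' X'' : ℝ → EuclideanSpace ℝ (Fin n)),
        (∀ t ∈ Set.Ici t₀, HasDerivAt X (X' t) t) →
        (∀ t ∈ Set.Ici t₀, HasDerivAt X' (X'' t) t) →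
        ContinuousOn X'' (Set.Ici t₀) →
        (∀ t ∈ Set.Ici t₀,
          Matrix.toEuclideanLin (Aᵀ * A) (X'' t + (r / t) • X' t)
            + gradient V (X t) = 0) →
        ‖X t₀ - Xstar‖ < δ → ‖X' t₀‖ < δ →
        ∀ t ∈ Set.Ici t₀, ‖X t - Xstar‖ < ε ∧ ‖X' t‖ < ε := by
  intro ε hε hball
  rcases isEmpty_or_nonempty (Fin n) with hn | hn
  · -- trivial case: the space is a single point
    haveI : Subsingleton (EuclideanSpace ℝ (Fin n)) :=
      ⟨fun a b => by ext i; exact isEmptyElim i⟩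
    refine ⟨ε, hε, ?_⟩
    intro t₀ ht₀ X X' X'' hX hX' hX'' hode h1 h2 t ht
    constructor
    · have h : X t - Xstar = 0 := Subsingleton.elim _ _
      rw [h]; simpa using hε
    · have h : X' t = 0 := Subsingleton.elim _ _
      rw [h]; simpa using hε
  -- main case
  set Q : EuclideanSpace ℝ (Fin n) →L[ℝ] EuclideanSpace ℝ (Fin n) :=
    LinearMap.toContinuousLinearMap (Matrix.toEuclideanLin (Aᵀ * A)) with hQ
  have hQapp : ∀ x, Q x = Matrix.toEuclideanLin (Aᵀ * A) x := fun x => rfl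
  have Vdiff : Differentiable ℝ V := by
    have hVfun : V = fun x => f x + g (Matrix.toEuclideanLin A x) := funext hV
    rw [hVfun]
    exact (hf.differentiable one_ne_zero).add ((hg.differentiable one_ne_zero).comp
      (LinearMap.toContinuousLinearMap (Matrix.toEuclideanLin A)).differentiable)
  have Vcont : Continuous V := Vdiff.continuous
  obtain ⟨lam, hlam, hlamle⟩ := aadmm_posdef_const A hA
  have hQlow : ∀ x, lam * ‖x‖^2 ≤ ⟪Q x, x⟫ := by
    intro x
    rw [hQapp, aadmm_inner_QA, real_inner_self_eq_norm_sq]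
    exact hlamle x
  have hQpos : ∀ x, (0:ℝ) ≤ ⟪Q x, x⟫ := fun x =>
    le_trans (by positivity) (hQlow x)
  have hQup : ∀ x, ⟪Q x, x⟫ ≤ ‖Q‖ * ‖x‖^2 := by
    intro x
    calc ⟪Q x, x⟫ ≤ ‖Q x‖ * ‖x‖ := real_inner_le_norm _ _
      _ ≤ (‖Q‖ * ‖x‖) * ‖x‖ := by
          exact mul_le_mul_of_nonneg_right (Q.le_opNorm x) (norm_nonneg x)
      _ = ‖Q‖ * ‖x‖^2 := by ring
  have hsymm : ∀ u w : EuclideanSpace ℝ (Fin n), ⟪Q u, w⟫ = ⟪Q w, u⟫ := by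
    intro u w
    rw [hQapp, hQapp, aadmm_inner_QA, aadmm_inner_QA, real_inner_comm]
  -- minimum of V on the sphere
  have hsne : (Metric.sphere Xstar ε).Nonempty :=
    NormedSpace.sphere_nonempty.mpr hε.le
  obtain ⟨w, hw, hwmin⟩ := (isCompact_sphere Xstar ε).exists_isMinOn hsne Vcont.continuousOn
  have hwO : w ∈ O := hball (Metric.sphere_subset_closedBall hw)
  have hwne : w ≠ Xstar := by
    intro h
    have : dist w Xstar = ε := hw
    rw [h, dist_self] at this
    exact hε.ne this
  have hc : 0 < V w - V Xstar := sub_pos.mpr (hstrict w ⟨hwO, hwne⟩)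
  set c : ℝ := V w - V Xstar with hcdef
  set b : ℝ := min c (lam/2 * ε^2) with hbdef
  have hb : 0 < b := lt_min hc (by positivity)
  -- continuity of V at Xstar
  obtain ⟨δ₁, hδ₁, hδ₁prop⟩ := Metric.continuousAt_iff.mp Vcont.continuousAt (b/2) (half_pos hb)
  set δ₂ : ℝ := Real.sqrt (b / (‖Q‖ + 1)) with hδ₂def
  have hQn : (0:ℝ) ≤ ‖Q‖ := norm_nonneg Q
  have hδ₂ : 0 < δ₂ := Real.sqrt_pos.mpr (by positivity)
  have hδ₂sq : δ₂^2 = b / (‖Q‖ + 1) := Real.sq_sqrt (by positivity)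
  set δ : ℝ := min (min δ₁ ε) δ₂ with hδdef
  have hδ : 0 < δ := lt_min (lt_min hδ₁ hε) hδ₂
  have hδle₁ : δ ≤ δ₁ := le_trans (min_le_left _ _) (min_le_left _ _)
  have hδleε : δ ≤ ε := le_trans (min_le_left _ _) (min_le_right _ _)
  have hδle₂ : δ ≤ δ₂ := min_le_right _ _
  refine ⟨δ, hδ, ?_⟩
  intro t₀ ht₀ X X' X'' hX hX' hX'' hode hx0 hv0
  -- the energy function
  set E : ℝ → ℝ := fun t => (1:ℝ)/2 * ⟪Q (X' t), X' t⟫ + V (X t) with hEdef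
  have hE : ∀ t ∈ Set.Ici t₀, HasDerivAt E (-(r/t) * ⟪Q (X' t), X' t⟫) t := by
    intro t ht
    have hd1 : HasDerivAt (fun s => ⟪Q (X' s), X' s⟫)
        (⟪Q (X' t), X'' t⟫ + ⟪Q (X'' t), X' t⟫) t :=
      HasDerivAt.inner ℝ (Q.hasFDerivAt.comp_hasDerivAt t (hX' t ht)) (hX' t ht)
    have hd2 : HasDerivAt (fun s => V (X s)) ⟪gradient V (X t), X' t⟫ t := by
      have h1 := hasGradientAt_iff_hasFDerivAt.mp (Vdiff (X t)).hasGradientAt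
      have h2 := h1.comp_hasDerivAt t (hX t ht)
      simp only [InnerProductSpace.toDual_apply_apply] at h2
      exact h2
    have hode' : ⟪Q (X'' t), X' t⟫ + (r/t) * ⟪Q (X' t), X' t⟫
        + ⟪gradient V (X t), X' t⟫ = 0 := by
      have h0 := hode t ht
      have hsum : Matrix.toEuclideanLin (Aᵀ * A) (X'' t + (r/t) • X' t)
          = Q (X'' t) + (r/t) • Q (X' t) := by
        rw [hQapp, hQapp]
        rw [(Matrix.toEuclideanLin (Aᵀ * A)).map_add,
          (Matrix.toEuclideanLin (Aᵀ * A)).map_smul]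
      rw [hsum] at h0
      have h1 := congrArg (fun w => ⟪w, X' t⟫) h0
      simp only [inner_add_left, real_inner_smul_left, inner_zero_left] at h1
      linarith [h1]
    have hsum := ((hd1.const_mul ((1:ℝ)/2)).add hd2)
    refine hsum.congr_deriv ?_
    rw [hsymm (X' t) (X'' t)]
    linarith [hode']
  have hEanti : AntitoneOn E (Set.Ici t₀) := by
    apply antitoneOn_of_deriv_nonpos (convex_Ici t₀)
    · exact fun t ht => (hE t ht).continuousAt.continuousWithinAt
    · intro t ht
      rw [interior_Ici] at ht
      exact (hE t (mem_Ici.mpr (le_of_lt ht))).differentiableAt.differentiableWithinAt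
    · intro t ht
      rw [interior_Ici] at ht
      rw [(hE t (mem_Ici.mpr (le_of_lt ht))).deriv]
      have htpos : (0:ℝ) < t := lt_trans ht₀ ht
      have h1 := hQpos (X' t)
      have h2 : (0:ℝ) ≤ r / t := by positivity
      rw [neg_mul]
      exact neg_nonpos.mpr (mul_nonneg h2 h1)
  -- the initial energy is small
  have hE0 : E t₀ < V Xstar + b := by
    have hv0' : ‖X' t₀‖ ≤ δ₂ := le_trans hv0.le hδle₂
    have h1 : ⟪Q (X' t₀), X' t₀⟫ ≤ ‖Q‖ * δ₂^2 := by
      refine le_trans (hQup _) ?_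
      have h : ‖X' t₀‖^2 ≤ δ₂^2 := pow_le_pow_left₀ (norm_nonneg _) hv0' 2
      exact mul_le_mul_of_nonneg_left h hQn
    have h2 : ‖Q‖ * δ₂^2 < b := by
      rw [hδ₂sq]
      rw [div_eq_mul_inv]
      have h3 : (0:ℝ) < ‖Q‖ + 1 := by positivity
      rw [show ‖Q‖ * (b * (‖Q‖ + 1)⁻¹) = b * (‖Q‖ * (‖Q‖+1)⁻¹) by ring]
      have h4 : ‖Q‖ * (‖Q‖+1)⁻¹ < 1 := by
        rw [mul_inv_lt_iff₀ h3]
        linarith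
      nlinarith
    have h3 : V (X t₀) - V Xstar < b/2 := by
      have hd : dist (X t₀) Xstar < δ₁ := by
        rw [dist_eq_norm]; exact lt_of_lt_of_le hx0 hδle₁
      have := hδ₁prop hd
      rw [Real.dist_eq] at this
      have := abs_lt.mp this
      linarith [this.1, this.2]
    simp only [hEdef]
    linarith
  have hEb : ∀ t ∈ Set.Ici t₀, E t < V Xstar + b := fun t ht =>
    lt_of_le_of_lt (hEanti self_mem_Ici ht ht) hE0
  -- V ≥ V Xstar on the closed ball
  have hVge : ∀ x ∈ Metric.closedBall Xstar ε, V Xstar ≤ V x := by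
    intro x hx
    rcases eq_or_ne x Xstar with rfl | hne
    · exact le_refl _
    · exact (hstrict x ⟨hball hx, hne⟩).le
  -- the trajectory never touches the sphere
  have hnosph : ∀ s ∈ Set.Ici t₀, ‖X s - Xstar‖ ≠ ε := by
    intro s hs habs
    have hsph : X s ∈ Metric.sphere Xstar ε := by
      rw [mem_sphere_iff_norm]; exact habs
    have h1 : V w ≤ V (X s) := hwmin hsph
    have h2 : E s < V Xstar + b := hEb s hs
    have h3 : V (X s) ≤ E s := by
      have := hQpos (X' s)
      simp only [hEdef]
      linarith
    have hbc : b ≤ c := min_le_left _ _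
    rw [hcdef] at hbc
    linarith
  have hXcont : ContinuousOn X (Set.Ici t₀) :=
    fun s hs => (hX s hs).continuousAt.continuousWithinAt
  have hx0' : ‖X t₀ - Xstar‖ < ε := lt_of_lt_of_le hx0 hδleε
  have hball_t : ∀ t ∈ Set.Ici t₀, ‖X t - Xstar‖ < ε := by
    intro t ht
    by_contra hcon
    push_neg at hcon
    have hφ : ContinuousOn (fun s => ‖X s - Xstar‖) (Set.Icc t₀ t) :=
      ((hXcont.mono Icc_subset_Ici_self).sub continuousOn_const).norm
    have hIVT := intermediate_value_Icc (show t₀ ≤ t from ht) hφ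
    have hmem : ε ∈ Set.Icc (‖X t₀ - Xstar‖) (‖X t - Xstar‖) := ⟨hx0'.le, hcon⟩
    obtain ⟨s, hs, hseq⟩ := hIVT hmem
    exact hnosph s (Icc_subset_Ici_self hs) hseq
  intro t ht
  refine ⟨hball_t t ht, ?_⟩
  have hxball : X t ∈ Metric.closedBall Xstar ε := by
    rw [Metric.mem_closedBall, dist_eq_norm]
    exact (hball_t t ht).le
  have h1 : V Xstar ≤ V (X t) := hVge _ hxball
  have h2 : E t < V Xstar + b := hEb t ht
  have h3 : lam * ‖X' t‖^2 ≤ ⟪Q (X' t), X' t⟫ := hQlow _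
  have h4 : lam/2 * ‖X' t‖^2 < b := by
    simp only [hEdef] at h2
    linarith
  have h5 : b ≤ lam/2 * ε^2 := min_le_right _ _
  have h6 : ‖X' t‖^2 < ε^2 := by nlinarith
  nlinarith [norm_nonneg (X' t), hε]
end

section
/- Let ρ > 0 and z, u ∈ ℝᵐ. If x⁺ ∈ ℝⁿ is a minimizer of x ↦ f(x) + (ρ/2)‖Ax − z + u‖² and z⁺ ∈ ℝᵐ is a minimizer of ζ ↦ g(ζ) + (ρ/2)‖Ax⁺ − ζ + u‖², then ∇f(x⁺) + Aᵀ∇g(z⁺) + ρ Aᵀ(z⁺ − z) = 0. -/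
open Matrix Set

section aux

variable {E F : Type*} [NormedAddCommGroup E] [InnerProductSpace ℝ E]
  [NormedAddCommGroup F] [InnerProductSpace ℝ F]
  [FiniteDimensional ℝ E] [FiniteDimensional ℝ F]

lemma hasGradientAt_quad (T : E →ₗ[ℝ] F) (c : F) (ρ : ℝ) (x : E) :
    HasGradientAt (fun y => ρ / 2 * ‖T y + c‖ ^ 2)
      (ρ • (LinearMap.adjoint T) (T x + c)) x := by
  rw [hasGradientAt_iff_hasFDerivAt]
  set T' := LinearMap.toContinuousLinearMap T with hT'
  have hw : HasFDerivAt (fun y => T y + c) T' x :=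
    T'.hasFDerivAt.add_const c
  have hin := (hw.inner ℝ hw).const_mul (ρ / 2)
  have heq : (fun y => ρ / 2 * ‖T y + c‖ ^ 2)
      = fun y => ρ / 2 * (inner ℝ (T y + c) (T y + c) : ℝ) := by
    funext y; rw [real_inner_self_eq_norm_sq]
  rw [heq]
  convert hin using 1
  · rfl
  ext h
  rw [hT']
  simp [fderivInnerCLM_apply, InnerProductSpace.toDual_apply_apply,
    LinearMap.adjoint_inner_left, real_inner_smul_left, real_inner_comm,
    inner_add_left, LinearMap.coe_toContinuousLinearMap']
  rw [real_inner_comm (T x + c) (T h), inner_add_left]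
  ring

lemma min_grad_zero {F₀ : E → ℝ} {x grad : E} (h : HasGradientAt F₀ grad x)
    (hmin : ∀ y, F₀ x ≤ F₀ y) : grad = 0 := by
  have hloc : IsLocalMin F₀ x := Filter.Eventually.of_forall hmin
  have h0 := hloc.hasFDerivAt_eq_zero h.hasFDerivAt
  apply (InnerProductSpace.toDual ℝ E).injective
  rw [map_zero]
  rw [hasGradientAt_iff_hasFDerivAt] at h
  exact h0

end aux

/-- **Combined optimality conditions of the ADMM subproblems.**
Let `ρ > 0` and `z, u ∈ ℝᵐ`. If `x⁺` minimizes `x ↦ f(x) + (ρ/2)‖Ax − z + u‖²` and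
`z⁺` minimizes `ζ ↦ g(ζ) + (ρ/2)‖Ax⁺ − ζ + u‖²`, then
`∇f(x⁺) + Aᵀ∇g(z⁺) + ρAᵀ(z⁺ − z) = 0`. -/
theorem admm_subproblem_optimality
    {m n : ℕ} (hmn : n ≤ m)
    (f : EuclideanSpace ℝ (Fin n) → ℝ) (g : EuclideanSpace ℝ (Fin m) → ℝ)
    (hf : ContDiff ℝ 1 f) (hg : ContDiff ℝ 1 g)
    (hfconv : ConvexOn ℝ Set.univ f) (hgconv : ConvexOn ℝ Set.univ g)
    (A : Matrix (Fin m) (Fin n) ℝ) (hA : A.rank = n)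
    (ρ : ℝ) (hρ : 0 < ρ) (z u : EuclideanSpace ℝ (Fin m))
    (xp : EuclideanSpace ℝ (Fin n))
    (hxp : ∀ x, f xp + (ρ / 2) * ‖Matrix.toEuclideanLin A xp - z + u‖ ^ 2
      ≤ f x + (ρ / 2) * ‖Matrix.toEuclideanLin A x - z + u‖ ^ 2)
    (zp : EuclideanSpace ℝ (Fin m))
    (hzp : ∀ ζ, g zp + (ρ / 2) * ‖Matrix.toEuclideanLin A xp - zp + u‖ ^ 2
      ≤ g ζ + (ρ / 2) * ‖Matrix.toEuclideanLin A xp - ζ + u‖ ^ 2) :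
    gradient f xp + Matrix.toEuclideanLin Aᵀ (gradient g zp)
      + ρ • Matrix.toEuclideanLin Aᵀ (zp - z) = 0 := by
  set T := Matrix.toEuclideanLin A with hT
  -- x-subproblem
  have hfd : DifferentiableAt ℝ f xp := (hf.differentiable one_ne_zero).differentiableAt
  have h1 : HasGradientAt (fun x => f x + ρ / 2 * ‖T x + (u - z)‖ ^ 2)
      (gradient f xp + ρ • (LinearMap.adjoint T) (T xp + (u - z))) xp := by
    rw [hasGradientAt_iff_hasFDerivAt, map_add]
    exact (hfd.hasGradientAt.hasFDerivAt).add (hasGradientAt_quad T (u - z) ρ xp).hasFDerivAt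
  have hsub : ∀ x : EuclideanSpace ℝ (Fin n), T x + (u - z) = T x - z + u := by
    intro x; abel
  have eq1 : gradient f xp + ρ • (LinearMap.adjoint T) (T xp + (u - z)) = 0 := by
    apply min_grad_zero h1
    intro y
    simp only [hsub]
    exact hxp y
  -- z-subproblem
  have hgd : DifferentiableAt ℝ g zp := (hg.differentiable one_ne_zero).differentiableAt
  have h2 : HasGradientAt (fun ζ => g ζ + ρ / 2 * ‖(-(LinearMap.id : EuclideanSpace ℝ (Fin m) →ₗ[ℝ] EuclideanSpace ℝ (Fin m))) ζ + (T xp + u)‖ ^ 2)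
      (gradient g zp + ρ • (LinearMap.adjoint (-(LinearMap.id : EuclideanSpace ℝ (Fin m) →ₗ[ℝ] EuclideanSpace ℝ (Fin m)))) ((-(LinearMap.id : EuclideanSpace ℝ (Fin m) →ₗ[ℝ] EuclideanSpace ℝ (Fin m))) zp + (T xp + u))) zp := by
    rw [hasGradientAt_iff_hasFDerivAt, map_add]
    exact (hgd.hasGradientAt.hasFDerivAt).add
      (hasGradientAt_quad _ (T xp + u) ρ zp).hasFDerivAt
  have hsub2 : ∀ ζ : EuclideanSpace ℝ (Fin m),
      (-(LinearMap.id : EuclideanSpace ℝ (Fin m) →ₗ[ℝ] EuclideanSpace ℝ (Fin m))) ζ + (T xp + u)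
        = T xp - ζ + u := by
    intro ζ; simp; abel
  have eq2 : gradient g zp + ρ • (LinearMap.adjoint (-(LinearMap.id : EuclideanSpace ℝ (Fin m) →ₗ[ℝ] EuclideanSpace ℝ (Fin m)))) ((-(LinearMap.id : EuclideanSpace ℝ (Fin m) →ₗ[ℝ] EuclideanSpace ℝ (Fin m))) zp + (T xp + u)) = 0 := by
    apply min_grad_zero h2
    intro y
    simp only [hsub2]
    exact hzp y
  have hg_eq : gradient g zp = ρ • (T xp - zp + u) := by
    have hid : LinearMap.adjoint (-(LinearMap.id : EuclideanSpace ℝ (Fin m) →ₗ[ℝ] EuclideanSpace ℝ (Fin m))) = -(LinearMap.id : EuclideanSpace ℝ (Fin m) →ₗ[ℝ] EuclideanSpace ℝ (Fin m)) := by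
      refine LinearMap.ext fun w => ?_
      apply ext_inner_right ℝ
      intro y
      rw [LinearMap.adjoint_inner_left]
      simp
    have h3 : (LinearMap.adjoint (-(LinearMap.id : EuclideanSpace ℝ (Fin m) →ₗ[ℝ] EuclideanSpace ℝ (Fin m)))) ((-(LinearMap.id : EuclideanSpace ℝ (Fin m) →ₗ[ℝ] EuclideanSpace ℝ (Fin m))) zp + (T xp + u)) = -(T xp - zp + u) := by
      rw [hid]
      simp
      abel
    rw [h3] at eq2
    rw [eq_neg_of_add_eq_zero_left eq2, smul_neg, neg_neg]
  -- adjoint identification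
  have hadj : Matrix.toEuclideanLin Aᵀ = LinearMap.adjoint T := by
    rw [hT, ← Matrix.toEuclideanLin_conjTranspose_eq_adjoint,
      Matrix.conjTranspose_eq_transpose_of_trivial]
  have hcomb : Matrix.toEuclideanLin Aᵀ (gradient g zp)
      + ρ • Matrix.toEuclideanLin Aᵀ (zp - z)
      = ρ • (LinearMap.adjoint T) (T xp + (u - z)) := by
    rw [hadj, hg_eq, _root_.map_smul, ← smul_add, ← map_add]
    congr 2
    abel
  rw [add_assoc, hcomb]
  exact eq1
end
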